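/- arXiv:1105.2130 — 8 statements merged into one kernel-verified Lean document; each statement's English description precedes it below -/
import Mathlib

section
/- Let ρ be a probability density on I = [−1,1] with first moment c₁ = 0, and S_ρ its Stieltjes transform. For any t with 0 < t ≤ 1, the equation t + (1−t)·z·S_ρ(z) = 0 has no solution z ∈ ℂ \ [−1,1]. -/
open MeasureTheory Set

/-- For a probability density `ρ` on `[-1,1]` with first moment `0`,
and `0 < t ≤ 1`, the equation `t + (1−t)·z·S_ρ(z) = 0` has no solution outside `[-1,1]`. -/
theorem stmt_1 (ρ : ℝ → ℝ)
    (hρ : ∀ x ∈ Icc (-1 : ℝ) 1, 0 ≤ ρ x)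
    (hρ1 : ∫ x in Icc (-1 : ℝ) 1, ρ x = 1)
    (hc₁ : ∫ x in Icc (-1 : ℝ) 1, x * ρ x = 0)
    (S : ℂ → ℂ)
    (hS : ∀ z ∉ (fun x : ℝ => (x : ℂ)) '' Icc (-1 : ℝ) 1,
      S z = ∫ u in Icc (-1 : ℝ) 1, (ρ u : ℂ) / (z - (u : ℂ))) :
    ∀ t : ℝ, 0 < t → t ≤ 1 →
      ∀ z ∉ (fun x : ℝ => (x : ℂ)) '' Icc (-1 : ℝ) 1,
        (t : ℂ) + (1 - (t : ℂ)) * z * S z ≠ 0 := by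
  intro t ht0 ht1 z hz h
  -- ρ is integrable on [-1,1]
  have hρint : IntegrableOn ρ (Icc (-1 : ℝ) 1) := by
    by_contra hc
    rw [integral_undef hc] at hρ1
    norm_num at hρ1
  -- z avoids the segment
  have hzu : ∀ u ∈ Icc (-1 : ℝ) 1, z - (u : ℂ) ≠ 0 := by
    intro u hu h0
    exact hz ⟨u, hu, by rw [sub_eq_zero] at h0; exact h0.symm⟩
  -- minimal distance
  obtain ⟨u₀, hu₀, hmin⟩ := (isCompact_Icc (a := (-1:ℝ)) (b := 1)).exists_isMinOn
      (f := fun u : ℝ => ‖z - (u : ℂ)‖) (Set.nonempty_Icc.mpr (by norm_num))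
      (continuous_norm.comp (continuous_const.sub Complex.continuous_ofReal)).continuousOn
  set m : ℝ := ‖z - (u₀ : ℂ)‖ with hm
  have hm0 : 0 < m := norm_pos_iff.mpr (hzu u₀ hu₀)
  -- integrability of the Stieltjes integrand
  have hfm : AEStronglyMeasurable (fun u : ℝ => (ρ u : ℂ) / (z - u))
      (volume.restrict (Icc (-1 : ℝ) 1)) := by
    apply AEMeasurable.aestronglyMeasurable
    apply AEMeasurable.div
    · exact Complex.measurable_ofReal.comp_aemeasurable hρint.1.aemeasurable
    · exact (measurable_const.sub Complex.measurable_ofReal).aemeasurable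
  have hint : IntegrableOn (fun u : ℝ => (ρ u : ℂ) / (z - u)) (Icc (-1 : ℝ) 1) := by
    apply Integrable.mono' ((hρint.abs).mul_const m⁻¹) hfm
    rw [ae_restrict_iff' measurableSet_Icc]
    filter_upwards with u hu
    have h1 : m ≤ ‖z - (u : ℂ)‖ := hmin hu
    have h2 : ‖z - (u : ℂ)‖ ≠ 0 := ne_of_gt (lt_of_lt_of_le hm0 h1)
    rw [norm_div, Complex.norm_real]
    rw [div_le_iff₀ (by positivity)]
    calc ‖ρ u‖ = |ρ u| * m⁻¹ * m := by field_simp; exact Real.norm_eq_abs _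
      _ ≤ |ρ u| * m⁻¹ * ‖z - (u : ℂ)‖ := by gcongr
  have hSz := hS z hz
  -- t = 1 case
  rcases eq_or_lt_of_le ht1 with h1 | h1
  · rw [h1] at h; norm_num at h
  have h1t : (0 : ℝ) < 1 - t := by linarith
  set s : ℝ := t / (1 - t) with hs
  have hs0 : 0 < s := div_pos ht0 h1t
  have h1tc : (1 : ℂ) - (t : ℂ) ≠ 0 := by
    intro hc
    rw [sub_eq_zero] at hc
    have : (t : ℝ) = 1 := by exact_mod_cast hc.symm
    linarith
  have hzS : z * S z = -(s : ℂ) := by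
    have hsc : (s : ℂ) * (1 - (t : ℂ)) = (t : ℂ) := by
      have hr : (s : ℝ) * (1 - t) = t := by
        rw [hs]; field_simp
      have hc := congrArg (fun r : ℝ => (r : ℂ)) hr
      push_cast at hc
      linear_combination hc
    apply mul_left_cancel₀ h1tc
    linear_combination h + hsc
  have hz0 : z ≠ 0 := by
    intro h0
    exact hz ⟨0, by norm_num, by simp [h0]⟩
  have hSz' : S z = -(s : ℂ) / z := by
    rw [eq_div_iff hz0]
    linear_combination hzS
  -- imaginary part computation
  set J : ℝ := ∫ u in Icc (-1 : ℝ) 1, ρ u / Complex.normSq (z - u) with hJ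
  have hJ0 : 0 ≤ J := by
    apply setIntegral_nonneg measurableSet_Icc
    intro u hu
    exact div_nonneg (hρ u hu) (Complex.normSq_nonneg _)
  have hptim : ∀ u : ℝ, ((ρ u : ℂ) / (z - u)).im
      = -z.im * (ρ u / Complex.normSq (z - u)) := by
    intro u
    rw [Complex.div_im]
    simp [Complex.sub_re, Complex.sub_im]
    ring
  have hswap_im : (∫ u in Icc (-1 : ℝ) 1, (ρ u : ℂ) / (z - u)).im
      = ∫ u in Icc (-1 : ℝ) 1, ((ρ u : ℂ) / (z - u)).im := by
    simpa using (integral_im hint).symm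
  have hSim : (S z).im = -z.im * J := by
    rw [hSz, hswap_im, hJ, ← integral_const_mul]
    exact setIntegral_congr_fun measurableSet_Icc fun u _ => hptim u
  have hnsq : 0 < Complex.normSq z := Complex.normSq_pos.2 hz0
  have him : z.im = 0 := by
    have hrhs : (-(s : ℂ) / z).im = s * z.im / Complex.normSq z := by
      rw [Complex.div_im]
      simp
      ring
    have hE : -z.im * J = s * z.im / Complex.normSq z := by
      rw [← hSim, hSz', hrhs]
    have hfac : z.im * (J + s / Complex.normSq z) = 0 := by
      field_simp at hE ⊢
      linarith [hE]
    rcases mul_eq_zero.1 hfac with h' | h'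
    · exact h'
    · exfalso
      have : 0 < J + s / Complex.normSq z := by positivity
      linarith
  -- z is real, outside [-1,1]
  set x : ℝ := z.re with hx
  have hxI : x ∉ Icc (-1 : ℝ) 1 := by
    intro hmem
    exact hz ⟨x, hmem, by apply Complex.ext <;> simp [him, hx]⟩
  -- real part computation
  have hptre : ∀ u ∈ Icc (-1 : ℝ) 1, 0 ≤ x * ((ρ u : ℂ) / (z - u)).re := by
    intro u hu
    rw [Complex.div_re]
    simp only [Complex.sub_re, Complex.sub_im, Complex.ofReal_re, Complex.ofReal_im, him]
    simp only [← hx]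
    have hmem := hu
    simp only [mem_Icc] at hmem hxI
    push_neg at hxI
    have hnn : 0 ≤ x * (x - u) := by
      rcases lt_or_ge x (-1) with hc | hc
      · nlinarith [hmem.1, hmem.2]
      · have : 1 < x := hxI hc
        nlinarith [hmem.1, hmem.2]
    have key : x * (ρ u * (x - u) / Complex.normSq (z - (u:ℂ))
          + 0 * (0 - 0) / Complex.normSq (z - (u:ℂ)))
        = ρ u * (x * (x - u)) / Complex.normSq (z - (u:ℂ)) := by ring
    rw [key]
    exact div_nonneg (mul_nonneg (hρ u hu) hnn) (Complex.normSq_nonneg _)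
  have hre : -s = ∫ u in Icc (-1 : ℝ) 1, x * ((ρ u : ℂ) / (z - u)).re := by
    have h1 : (z * S z).re = -s := by rw [hzS]; simp
    have h2 : (z * S z).re = x * (S z).re := by
      rw [Complex.mul_re, him]; ring
    have hswap_re : (∫ u in Icc (-1 : ℝ) 1, (ρ u : ℂ) / (z - u)).re
        = ∫ u in Icc (-1 : ℝ) 1, ((ρ u : ℂ) / (z - u)).re := by
      simpa using (integral_re hint).symm
    rw [← h1, h2, hSz, hswap_re, integral_const_mul]
  have hge : 0 ≤ ∫ u in Icc (-1 : ℝ) 1, x * ((ρ u : ℂ) / (z - u)).re :=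
    setIntegral_nonneg measurableSet_Icc hptre
  rw [← hre] at hge
  linarith
end

section
/- Let ρ be a probability density on I = [−1,1] with first moment c₁ ∈ (−1,1), and 0 < t ≤ 1. Then the equation t + (1−t)(z − c₁)S_ρ(z) = 0 has no non-real solution z ∈ ℂ \ ℝ. (Key step: writing z = x + iy with y ≠ 0, the imaginary and real parts force ∫_I [(1−t)(x−c₁)² + y² + t(x−u)²] ρ(u)/((x−u)²+y²) du = 0, which is impossible since the integrand is positive.) -/
open MeasureTheory Set

/-- For a probability density `ρ` on `[-1,1]` with first moment
`c₁ ∈ (−1,1)` and `0 < t ≤ 1`, the equation `t + (1−t)(z−c₁)S_ρ(z) = 0` has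
no non-real solution. -/
theorem stmt_2 (ρ : ℝ → ℝ) (c₁ t : ℝ)
    (hρ : ∀ x ∈ Icc (-1 : ℝ) 1, 0 ≤ ρ x)
    (hρ1 : ∫ x in Icc (-1 : ℝ) 1, ρ x = 1)
    (hc₁ : c₁ = ∫ x in Icc (-1 : ℝ) 1, x * ρ x)
    (hc₁mem : c₁ ∈ Ioo (-1 : ℝ) 1)
    (ht : 0 < t) (ht1 : t ≤ 1)
    (S : ℂ → ℂ)
    (hS : ∀ z : ℂ, z.im ≠ 0 →
      S z = ∫ u in Icc (-1 : ℝ) 1, (ρ u : ℂ) / (z - (u : ℂ))) :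
    ∀ z : ℂ, z.im ≠ 0 →
      (t : ℂ) + (1 - (t : ℂ)) * (z - (c₁ : ℂ)) * S z ≠ 0 := by
  intro z hz h
  set x : ℝ := z.re with hx
  set y : ℝ := z.im with hy
  -- dispose of t = 1
  rcases eq_or_lt_of_le ht1 with ht1' | ht1'
  · subst ht1'
    norm_num at h
  have h1t : (0:ℝ) < 1 - t := by linarith
  have h1tC : ((1:ℂ) - (t:ℂ)) ≠ 0 := by
    intro hcon
    have : (1:ℝ) - t = 0 := by exact_mod_cast hcon
    linarith
  set r : ℝ := t / (1 - t) with hr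
  have hrpos : 0 < r := div_pos ht h1t
  -- ρ is integrable on Icc
  have hρint : IntegrableOn ρ (Icc (-1 : ℝ) 1) := by
    by_contra hcon
    rw [integral_undef hcon] at hρ1
    exact one_ne_zero hρ1.symm
  -- denominators
  have hDpos : ∀ u : ℝ, 0 < (x - u) ^ 2 + y ^ 2 := by
    intro u
    have : y ^ 2 > 0 := pow_pos (abs_pos.mpr hz) 2 |>.trans_le (by rw [sq_abs])
    positivity
  have hzu : ∀ u : ℝ, z - (u : ℂ) ≠ 0 := by
    intro u hcon
    apply hz
    have := congrArg Complex.im hcon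
    simpa using this
  -- the complex integrand
  set G : ℝ → ℂ := fun u => (ρ u : ℂ) * ((z - (c₁:ℂ)) * (z - (u:ℂ))⁻¹) with hG
  have hGcont : ContinuousOn (fun u : ℝ => (z - (c₁:ℂ)) * (z - (u:ℂ))⁻¹)
      (Icc (-1:ℝ) 1) := by
    apply ContinuousOn.mul continuousOn_const
    apply ContinuousOn.inv₀
    · fun_prop
    · exact fun u _ => hzu u
  have hGint : IntegrableOn G (Icc (-1:ℝ) 1) := by
    have := hρint.smul_continuousOn hGcont isCompact_Icc
    simpa [G, smul_eq_mul, Complex.real_smul] using this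
  -- (z - c₁) * S z = ∫ G
  have hwS : (z - (c₁:ℂ)) * S z = ∫ u in Icc (-1:ℝ) 1, G u := by
    rw [hS z hz, ← integral_const_mul]
    congr 1
    ext u
    rw [hG]
    field_simp
  -- from the equation: (z - c₁) * S z = -r
  have hwSr : (z - (c₁:ℂ)) * S z = -(r : ℂ) := by
    have h2 : (z - (c₁:ℂ)) * S z = -(t:ℂ) / (1 - (t:ℂ)) := by
      rw [eq_div_iff h1tC]
      linear_combination h
    rw [h2, hr]
    push_cast
    ring
  -- pointwise real and imaginary parts
  have hGim : ∀ u : ℝ, (G u).im = y * (ρ u * ((c₁ - u) / ((x - u) ^ 2 + y ^ 2))) := by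
    intro u
    have hD : (x - u) * (x - u) + y * y ≠ 0 := by
      have h1 := mul_self_nonneg (x - u)
      have h2 := mul_self_pos.mpr hz
      nlinarith
    rw [hG]
    simp only [Complex.mul_im, Complex.mul_re, Complex.inv_im, Complex.inv_re,
      Complex.normSq_apply, Complex.sub_re, Complex.sub_im, Complex.ofReal_re,
      Complex.ofReal_im, ← hx, ← hy]
    field_simp
    ring
  have hGre : ∀ u : ℝ, (G u).re =
      ρ u * (((x - c₁) ^ 2 + y ^ 2) / ((x - u) ^ 2 + y ^ 2))
        + (x - c₁) * (ρ u * ((c₁ - u) / ((x - u) ^ 2 + y ^ 2))) := by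
    intro u
    have hD : (x - u) * (x - u) + y * y ≠ 0 := by
      have h1 := mul_self_nonneg (x - u)
      have h2 := mul_self_pos.mpr hz
      nlinarith
    rw [hG]
    simp only [Complex.mul_im, Complex.mul_re, Complex.inv_im, Complex.inv_re,
      Complex.normSq_apply, Complex.sub_re, Complex.sub_im, Complex.ofReal_re,
      Complex.ofReal_im, ← hx, ← hy]
    field_simp
    ring
  -- integrability of the real pieces
  have hI1int : IntegrableOn (fun u : ℝ => ρ u * ((c₁ - u) / ((x - u) ^ 2 + y ^ 2)))
      (Icc (-1:ℝ) 1) := by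
    apply hρint.mul_continuousOn _ isCompact_Icc
    apply ContinuousOn.div (by fun_prop) (by fun_prop)
    exact fun u _ => (hDpos u).ne'
  have hI2int : IntegrableOn (fun u : ℝ => ρ u * (((x - c₁) ^ 2 + y ^ 2) / ((x - u) ^ 2 + y ^ 2)))
      (Icc (-1:ℝ) 1) := by
    apply hρint.mul_continuousOn _ isCompact_Icc
    apply ContinuousOn.div (by fun_prop) (by fun_prop)
    exact fun u _ => (hDpos u).ne'
  -- imaginary part gives I₁ = 0
  have him : ∫ u in Icc (-1:ℝ) 1, (G u).im = 0 := by
    have h1 : ∫ u in Icc (-1:ℝ) 1, (G u).im = (∫ u in Icc (-1:ℝ) 1, G u).im :=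
      integral_im hGint
    rw [h1, ← hwS, hwSr]
    simp
  have hI1 : ∫ u in Icc (-1:ℝ) 1, ρ u * ((c₁ - u) / ((x - u) ^ 2 + y ^ 2)) = 0 := by
    have : ∫ u in Icc (-1:ℝ) 1, (G u).im
        = y * ∫ u in Icc (-1:ℝ) 1, ρ u * ((c₁ - u) / ((x - u) ^ 2 + y ^ 2)) := by
      rw [← integral_const_mul]
      exact integral_congr_ae (Filter.Eventually.of_forall fun u => hGim u)
    rw [this] at him
    exact (mul_eq_zero.mp him).resolve_left hz
  -- real part
  have hre : ∫ u in Icc (-1:ℝ) 1, (G u).re = -r := by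
    have h1 : ∫ u in Icc (-1:ℝ) 1, (G u).re = (∫ u in Icc (-1:ℝ) 1, G u).re :=
      integral_re hGint
    rw [h1, ← hwS, hwSr]
    simp
  have hre2 : ∫ u in Icc (-1:ℝ) 1,
      ρ u * (((x - c₁) ^ 2 + y ^ 2) / ((x - u) ^ 2 + y ^ 2)) = -r := by
    have heq : ∫ u in Icc (-1:ℝ) 1, (G u).re
        = (∫ u in Icc (-1:ℝ) 1, ρ u * (((x - c₁) ^ 2 + y ^ 2) / ((x - u) ^ 2 + y ^ 2)))
          + (x - c₁) * ∫ u in Icc (-1:ℝ) 1, ρ u * ((c₁ - u) / ((x - u) ^ 2 + y ^ 2)) := by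
      rw [← integral_const_mul, ← integral_add hI2int (hI1int.const_mul _)]
      exact integral_congr_ae (Filter.Eventually.of_forall fun u => hGre u)
    rw [heq, hI1, mul_zero, add_zero] at hre
    exact hre
  -- positivity contradiction
  have hnonneg : 0 ≤ ∫ u in Icc (-1:ℝ) 1,
      ρ u * (((x - c₁) ^ 2 + y ^ 2) / ((x - u) ^ 2 + y ^ 2)) := by
    apply setIntegral_nonneg measurableSet_Icc
    intro u hu
    have := hρ u hu
    have := hDpos u
    positivity
  rw [hre2] at hnonneg
  linarith
end

section
/- Let ρ(x) = (2/π)√(1−x²) be the Chebyshev density of the second kind on (−1,1). Then its first moment is 0, its reducer is φ(x) = lim_{ε→0⁺} 2∫_{−1}^{1} (x−u)ρ(u)/((x−u)²+ε²) du = 4x, and its secondary measure has density μ(x) = ρ(x)/(φ(x)²/4 + π²ρ(x)²) = ρ(x)/4. -/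
open MeasureTheory Set Filter intervalIntegral

lemma q_meas : Measurable (fun u : ℝ => 1 / Real.sqrt (1 - u^2)) := by
  fun_prop

lemma q_int : IntegrableOn (fun u : ℝ => 1 / Real.sqrt (1 - u^2)) (Ioo (-1 : ℝ) 1) := by
  have h1 : IntervalIntegrable (fun u : ℝ => ((1:ℝ) - u) ^ (-(1/2) : ℝ)) volume (-1) 1 := by
    have h := (intervalIntegrable_rpow' (a := 0) (b := 2) (r := (-(1/2):ℝ)) (by norm_num)).comp_sub_left 1
    norm_num at h
    exact h.symm
  have h2 : IntervalIntegrable (fun u : ℝ => ((1:ℝ) + u) ^ (-(1/2) : ℝ)) volume (-1) 1 := by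
    have h := (intervalIntegrable_rpow' (a := 0) (b := 2) (r := (-(1/2):ℝ)) (by norm_num)).comp_add_left 1
    norm_num at h
    simpa [add_comm] using h
  have hb : IntegrableOn (fun u : ℝ => ((1:ℝ) - u) ^ (-(1/2) : ℝ) + ((1:ℝ) + u) ^ (-(1/2) : ℝ)) (Ioo (-1:ℝ) 1) := by
    have := (h1.add h2)
    rw [intervalIntegrable_iff_integrableOn_Ioo_of_le (by norm_num)] at this
    exact this
  apply hb.integrable.mono' (q_meas.aestronglyMeasurable)
  filter_upwards [ae_restrict_mem measurableSet_Ioo] with u hu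
  obtain ⟨hu1, hu2⟩ := hu
  have ha : (0:ℝ) < 1 - u := by linarith
  have hbp : (0:ℝ) < 1 + u := by linarith
  have hfac : (1:ℝ) - u^2 = (1-u) * (1+u) := by ring
  have hs : Real.sqrt (1 - u^2) = Real.sqrt (1-u) * Real.sqrt (1+u) := by
    rw [hfac, Real.sqrt_mul ha.le]
  have hra : ((1:ℝ) - u) ^ (-(1/2):ℝ) = 1 / Real.sqrt (1-u) := by
    rw [Real.rpow_neg ha.le, Real.sqrt_eq_rpow]; norm_num
  have hrb : ((1:ℝ) + u) ^ (-(1/2):ℝ) = 1 / Real.sqrt (1+u) := by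
    rw [Real.rpow_neg hbp.le, Real.sqrt_eq_rpow]; norm_num
  rw [hra, hrb, Real.norm_eq_abs, hs]
  have sa := Real.sqrt_pos.2 ha
  have sb := Real.sqrt_pos.2 hbp
  have hsum : 1 ≤ Real.sqrt (1-u) + Real.sqrt (1+u) := by
    nlinarith [Real.sq_sqrt ha.le, Real.sq_sqrt hbp.le, Real.sqrt_nonneg (1-u), Real.sqrt_nonneg (1+u)]
  rw [abs_of_nonneg (by positivity)]
  rw [div_add_div _ _ (ne_of_gt sa) (ne_of_gt sb)]
  rw [div_le_div_iff₀ (by positivity) (by positivity)]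
  nlinarith [mul_pos sa sb]


noncomputable def Hfun (x u : ℝ) : ℝ :=
  (Real.log |u - x| -
    Real.log (1 - x*u + Real.sqrt (1-x^2) * Real.sqrt (1-u^2))) / Real.sqrt (1-x^2)

lemma B_pos {x u : ℝ} (hx : x ∈ Ioo (-1:ℝ) 1) (hu : u ∈ Icc (-1:ℝ) 1) :
    0 < 1 - x*u + Real.sqrt (1-x^2) * Real.sqrt (1-u^2) := by
  obtain ⟨hx1, hx2⟩ := hx; obtain ⟨hu1, hu2⟩ := hu
  have h1 : x*u ≤ |x| * |u| := by
    rw [← abs_mul]; exact le_abs_self _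
  have h2 : |x| < 1 := abs_lt.2 ⟨hx1, hx2⟩
  have h3 : |u| ≤ 1 := abs_le.2 ⟨hu1, hu2⟩
  have h4 : x * u < 1 := by nlinarith [abs_nonneg x, abs_nonneg u]
  have h5 : (0:ℝ) ≤ Real.sqrt (1-x^2) * Real.sqrt (1-u^2) := by positivity
  linarith

lemma S_hasDeriv {u : ℝ} (hu : u ∈ Ioo (-1:ℝ) 1) :
    HasDerivAt (fun v : ℝ => Real.sqrt (1-v^2)) (-u / Real.sqrt (1-u^2)) u := by
  obtain ⟨hu1, hu2⟩ := hu
  have hne : (1:ℝ) - u^2 ≠ 0 := by nlinarith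
  have hpos : (0:ℝ) < 1 - u^2 := by nlinarith
  have h1 : HasDerivAt (fun v : ℝ => 1 - v^2) (-(2*u)) u := by
    simpa using ((hasDerivAt_pow 2 u).const_sub 1)
  have h2 := (Real.hasDerivAt_sqrt hne).comp u h1
  refine h2.congr_deriv (Eq.symm ?_)
  have : Real.sqrt (1-u^2) ≠ 0 := ne_of_gt (Real.sqrt_pos.2 hpos)
  field_simp

lemma Hfun_deriv {x u : ℝ} (hx : x ∈ Ioo (-1:ℝ) 1) (hu : u ∈ Ioo (-1:ℝ) 1) (hne : u ≠ x) :
    HasDerivAt (Hfun x) (1 / ((u - x) * Real.sqrt (1-u^2))) u := by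
  have hc2 : Real.sqrt (1-x^2) ^ 2 = 1 - x^2 := Real.sq_sqrt (by nlinarith [hx.1, hx.2])
  have hc : 0 < Real.sqrt (1-x^2) := Real.sqrt_pos.2 (by nlinarith [hx.1, hx.2])
  have hS2 : Real.sqrt (1-u^2) ^ 2 = 1 - u^2 := Real.sq_sqrt (by nlinarith [hu.1, hu.2])
  have hS : 0 < Real.sqrt (1-u^2) := Real.sqrt_pos.2 (by nlinarith [hu.1, hu.2])
  have hB : 0 < 1 - x*u + Real.sqrt (1-x^2) * Real.sqrt (1-u^2) :=
    B_pos hx ⟨hu.1.le, hu.2.le⟩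
  have hux : u - x ≠ 0 := sub_ne_zero.2 hne
  set c := Real.sqrt (1-x^2)
  -- derivative of log |u - x|
  have hd1 : HasDerivAt (fun v : ℝ => Real.log |v - x|) (1/(u-x)) u := by
    have h0 : HasDerivAt (fun v : ℝ => v - x) 1 u := (hasDerivAt_id u).sub_const x
    have h1 := (Real.hasDerivAt_log hux).comp u h0
    have he : (fun v : ℝ => Real.log |v - x|) = fun v : ℝ => Real.log (v - x) := by
      funext v; rw [Real.log_abs]
    rw [he]
    exact h0.log hux
  -- derivative of log B
  have hd2 : HasDerivAt (fun v : ℝ => Real.log (1 - x*v + c * Real.sqrt (1-v^2)))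
      ((-x + c * (-u / Real.sqrt (1-u^2))) / (1 - x*u + c * Real.sqrt (1-u^2))) u := by
    have hB1 : HasDerivAt (fun v : ℝ => 1 - x*v + c * Real.sqrt (1-v^2))
        (-x + c * (-u / Real.sqrt (1-u^2))) u := by
      have ha : HasDerivAt (fun v : ℝ => 1 - x*v) (-x) u := by
        simpa using ((hasDerivAt_id u).const_mul x).const_sub 1
      exact ha.add ((S_hasDeriv hu).const_mul c)
    exact hB1.log (ne_of_gt hB)
  have hd := (hd1.sub hd2).div_const c
  refine hd.congr_deriv (Eq.symm ?_)
  set S := Real.sqrt (1-u^2)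
  rw [div_sub_div _ _ hux (ne_of_gt hB)]
  have hBne : 1 - u*x + S*c ≠ 0 := ne_of_gt (by linarith)
  field_simp
  linear_combination S * hc2 - c * hS2

lemma Hfun_contOn {x a b : ℝ} (hx : x ∈ Ioo (-1:ℝ) 1) (ha : -1 ≤ a) (hb : b ≤ 1)
    (hxs : ∀ u ∈ Icc a b, u ≠ x) : ContinuousOn (Hfun x) (Icc a b) := by
  apply ContinuousOn.div_const
  apply ContinuousOn.sub
  · apply ContinuousOn.log
    · exact (continuous_abs.comp (continuous_id.sub continuous_const)).continuousOn
    · intro u hu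
      exact abs_ne_zero.2 (sub_ne_zero.2 (hxs u hu))
  · apply ContinuousOn.log
    · apply Continuous.continuousOn
      continuity
    · intro u hu
      refine ne_of_gt (B_pos hx ⟨?_, ?_⟩)
      · linarith [hu.1]
      · linarith [hu.2]

lemma Hfun_neg_one {x : ℝ} (hx : x ∈ Ioo (-1:ℝ) 1) : Hfun x (-1) = 0 := by
  have h1 : ((1:ℝ) - (-1:ℝ)^2) = 0 := by norm_num
  have h2 : |(-1:ℝ) - x| = 1 + x := by
    rw [abs_sub_comm, abs_of_pos (by linarith [hx.1])]; ring
  simp only [Hfun, h1, h2, Real.sqrt_zero, mul_zero, add_zero]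
  rw [show x * (-1:ℝ) = -x by ring]
  norm_num

lemma Hfun_one {x : ℝ} (hx : x ∈ Ioo (-1:ℝ) 1) : Hfun x 1 = 0 := by
  have h1 : ((1:ℝ) - (1:ℝ)^2) = 0 := by norm_num
  have h2 : |(1:ℝ) - x| = 1 - x := abs_of_pos (by linarith [hx.2])
  simp [Hfun, h1, h2, mul_one]

lemma intH {x a b d : ℝ} (hx : x ∈ Ioo (-1:ℝ) 1) (ha : -1 ≤ a) (hab : a ≤ b) (hb : b ≤ 1)
    (hd : 0 < d) (hdist : ∀ u ∈ Icc a b, d ≤ |u - x|) :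
    ∫ u in a..b, 1 / ((u - x) * Real.sqrt (1-u^2)) = Hfun x b - Hfun x a := by
  have hxs : ∀ u ∈ Icc a b, u ≠ x := by
    intro u hu
    have := hdist u hu
    intro h; rw [h] at this; simp at this; linarith
  apply integral_eq_sub_of_hasDeriv_right_of_le hab (Hfun_contOn hx ha hb hxs)
  · intro u hu
    have hu' : u ∈ Ioo (-1:ℝ) 1 := ⟨lt_of_le_of_lt ha hu.1, lt_of_lt_of_le hu.2 hb⟩
    exact (Hfun_deriv hx hu' (hxs u ⟨hu.1.le, hu.2.le⟩)).hasDerivWithinAt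
  · rw [intervalIntegrable_iff_integrableOn_Ioo_of_le hab]
    have hsub : Ioo a b ⊆ Ioo (-1:ℝ) 1 := fun u hu => ⟨lt_of_le_of_lt ha hu.1, lt_of_lt_of_le hu.2 hb⟩
    apply (((q_int.mono_set hsub)).const_mul (1/d)).mono'
    · apply Measurable.aestronglyMeasurable
      fun_prop
    · filter_upwards [ae_restrict_mem measurableSet_Ioo] with u hu
      have hu' : u ∈ Ioo (-1:ℝ) 1 := hsub hu
      have hS : 0 < Real.sqrt (1-u^2) := Real.sqrt_pos.2 (by nlinarith [hu'.1, hu'.2])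
      have hdu := hdist u ⟨hu.1.le, hu.2.le⟩
      have hux : u - x ≠ 0 := by
        intro h; rw [h] at hdu; simp at hdu; linarith
      rw [Real.norm_eq_abs, abs_div, abs_mul, abs_of_pos hS]
      rw [abs_one]
      rw [div_le_iff₀ (by positivity)]
      have : 1/d * (1/Real.sqrt (1-u^2)) * (|u-x| * Real.sqrt (1-u^2)) = |u-x|/d := by
        field_simp
      rw [this, le_div_iff₀ hd]
      nlinarith [mul_le_mul_of_nonneg_right hdu (Real.sqrt_nonneg (1-u^2))]

lemma sq_ub {x δ v : ℝ} (hxd : |x| + δ < 1) (hδ : 0 < δ) (hv : |v - x| ≤ δ) :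
    1 - (|x|+δ)^2 ≤ 1 - v^2 := by
  have h1 : |v| ≤ |x| + δ := by
    calc |v| = |x + (v - x)| := by ring_nf
    _ ≤ |x| + |v - x| := abs_add_le _ _
    _ ≤ |x| + δ := by linarith
  have h2 : v^2 ≤ (|x|+δ)^2 := by
    rw [← sq_abs v]
    exact pow_le_pow_left₀ (abs_nonneg v) h1 2
  linarith

lemma near_bound {x δ t : ℝ} (hδ : 0 < δ) (hxd : |x| + δ < 1) (hmpos : 0 < 1 - (|x|+δ)^2)
    (ht : t ∈ Ioc (0:ℝ) δ) :
    |1/Real.sqrt (1-(x+t)^2) - 1/Real.sqrt (1-(x-t)^2)| ≤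
      2 / ((1 - (|x|+δ)^2) * Real.sqrt (1 - (|x|+δ)^2)) * t := by
  set m := 1 - (|x|+δ)^2 with hm
  have hp : m ≤ 1 - (x+t)^2 :=
    sq_ub hxd hδ (by rw [show x + t - x = t by ring, abs_of_pos ht.1]; exact ht.2)
  have hq : m ≤ 1 - (x-t)^2 :=
    sq_ub hxd hδ (by rw [show x - t - x = -t by ring, abs_neg, abs_of_pos ht.1]; exact ht.2)
  set Sp := Real.sqrt (1-(x+t)^2) with hSpdef
  set Sm := Real.sqrt (1-(x-t)^2) with hSmdef
  set sm := Real.sqrt m with hsmdef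
  have hsm : 0 < sm := Real.sqrt_pos.2 hmpos
  have hsm2 : sm * sm = m := Real.mul_self_sqrt hmpos.le
  have hple : sm ≤ Sp := Real.sqrt_le_sqrt hp
  have hqle : sm ≤ Sm := Real.sqrt_le_sqrt hq
  have hSp : 0 < Sp := lt_of_lt_of_le hsm hple
  have hSm : 0 < Sm := lt_of_lt_of_le hsm hqle
  have hSp2 : Sp^2 = 1-(x+t)^2 := Real.sq_sqrt (by linarith)
  have hSm2 : Sm^2 = 1-(x-t)^2 := Real.sq_sqrt (by linarith)
  have hxabs : |x| < 1 := by linarith [abs_nonneg x]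
  have key : 1/Sp - 1/Sm = (Sm - Sp)/(Sp*Sm) := by field_simp
  rw [key, abs_div, abs_of_pos (mul_pos hSp hSm)]
  have habs : |Sm - Sp| * (Sm + Sp) = |4*x*t| := by
    rw [← abs_of_pos (show (0:ℝ) < Sm+Sp by linarith), ← abs_mul]
    congr 1
    linear_combination hSm2 - hSp2
  have h1 : |Sm - Sp| ≤ 2*t/sm := by
    rw [le_div_iff₀ hsm]
    have e1 : |Sm - Sp| * sm ≤ |Sm - Sp| * ((Sm + Sp)/2) := by
      apply mul_le_mul_of_nonneg_left _ (abs_nonneg _)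
      linarith
    have e2 : |Sm - Sp| * ((Sm + Sp)/2) = |4*x*t|/2 := by rw [← habs]; ring
    have e3 : |4*x*t| ≤ 4*t := by
      rw [abs_mul, abs_mul, abs_of_pos ht.1, show |(4:ℝ)| = 4 by norm_num]
      nlinarith [abs_nonneg x, ht.1]
    linarith
  calc |Sm - Sp| / (Sp * Sm) ≤ (2*t/sm) / m := by
        apply div_le_div₀ (by have := ht.1; positivity) h1 hmpos
        nlinarith [mul_le_mul hple hqle hsm.le (le_of_lt hSp)]
  _ = 2 / (m * sm) * t := by rw [div_div]; ring

noncomputable def Kfun (x t : ℝ) : ℝ :=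
  (Real.log (1 - x*(x-t) + Real.sqrt (1-x^2) * Real.sqrt (1-(x-t)^2)) -
   Real.log (1 - x*(x+t) + Real.sqrt (1-x^2) * Real.sqrt (1-(x+t)^2))) / Real.sqrt (1-x^2)

lemma Kfun_eq (x : ℝ) {t : ℝ} (ht : 0 < t) : Kfun x t = Hfun x (x+t) - Hfun x (x-t) := by
  unfold Kfun Hfun
  rw [show x + t - x = t by ring, show x - t - x = -t by ring, abs_neg, abs_of_pos ht]
  ring

lemma Kfun_zero (x : ℝ) : Kfun x 0 = 0 := by simp [Kfun]

lemma near_int {x δ : ℝ} (hx : x ∈ Ioo (-1:ℝ) 1) (hδ : 0 < δ) (hxd : |x| + δ < 1) :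
    ∫ t in (0:ℝ)..δ, (1/Real.sqrt (1-(x+t)^2) - 1/Real.sqrt (1-(x-t)^2)) / t
      = Hfun x (x+δ) - Hfun x (x-δ) := by
  have hmpos : 0 < 1 - (|x|+δ)^2 := by nlinarith [abs_nonneg x]
  have hmem : ∀ t ∈ Icc (0:ℝ) δ, (x+t) ∈ Icc (-1:ℝ) 1 ∧ (x-t) ∈ Icc (-1:ℝ) 1 := by
    intro t ht
    have h1 : -|x| ≤ x := neg_abs_le x
    have h2 : x ≤ |x| := le_abs_self x
    constructor <;> constructor <;> [skip; skip; skip; skip] <;> nlinarith [ht.1, ht.2]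
  have key : ∫ t in (0:ℝ)..δ, (1/Real.sqrt (1-(x+t)^2) - 1/Real.sqrt (1-(x-t)^2)) / t
      = Kfun x δ - Kfun x 0 := by
    apply integral_eq_sub_of_hasDeriv_right_of_le hδ.le
    · -- continuity
      apply ContinuousOn.div_const
      apply ContinuousOn.sub <;>
      · apply ContinuousOn.log
        · apply Continuous.continuousOn; continuity
        · intro t ht
          refine ne_of_gt (B_pos hx ?_)
          · first
              | exact (hmem t ht).2
              | exact (hmem t ht).1
    · -- derivative
      intro t ht
      have htpos : 0 < t := ht.1
      have hune : x + t ≠ x := by intro h; linarith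
      have hmne : x - t ≠ x := by intro h; linarith
      have hp : (x+t) ∈ Ioo (-1:ℝ) 1 := by
        constructor <;> nlinarith [neg_abs_le x, le_abs_self x, abs_nonneg x, ht.1, ht.2]
      have hq : (x-t) ∈ Ioo (-1:ℝ) 1 := by
        constructor <;> nlinarith [neg_abs_le x, le_abs_self x, abs_nonneg x, ht.1, ht.2]
      have hSp : 0 < Real.sqrt (1-(x+t)^2) := Real.sqrt_pos.2 (by nlinarith [hp.1, hp.2])
      have hSm : 0 < Real.sqrt (1-(x-t)^2) := Real.sqrt_pos.2 (by nlinarith [hq.1, hq.2])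
      have h1 : HasDerivAt (fun s : ℝ => Hfun x (x+s)) (1/(t * Real.sqrt (1-(x+t)^2))) t := by
        have hc : HasDerivAt (fun s : ℝ => x + s) 1 t := (hasDerivAt_id t).const_add x
        have := (Hfun_deriv hx hp hune).comp t hc
        rw [show x + t - x = t by ring, mul_one] at this
        exact this
      have h2 : HasDerivAt (fun s : ℝ => Hfun x (x-s)) (1/(t * Real.sqrt (1-(x-t)^2))) t := by
        have hc : HasDerivAt (fun s : ℝ => x - s) (-1) t := by
          simpa using ((hasDerivAt_id t).const_sub x)
        have := (Hfun_deriv hx hq hmne).comp t hc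
        have he : 1 / ((x - t - x) * Real.sqrt (1-(x-t)^2)) * (-1)
            = 1/(t * Real.sqrt (1-(x-t)^2)) := by
          rw [show x - t - x = -t by ring]
          field_simp
        rw [← he]
        exact this
      have hK : HasDerivAt (Kfun x)
          ((1/Real.sqrt (1-(x+t)^2) - 1/Real.sqrt (1-(x-t)^2)) / t) t := by
        have hsub := h1.sub h2
        have he : 1/(t * Real.sqrt (1-(x+t)^2)) - 1/(t * Real.sqrt (1-(x-t)^2))
            = (1/Real.sqrt (1-(x+t)^2) - 1/Real.sqrt (1-(x-t)^2)) / t := by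
          field_simp
        rw [he] at hsub
        apply hsub.congr_of_eventuallyEq
        filter_upwards [eventually_gt_nhds htpos] with s hs
        exact Kfun_eq x hs
      exact hK.hasDerivWithinAt

    · -- integrability
      rw [intervalIntegrable_iff_integrableOn_Ioo_of_le hδ.le]
      apply Integrable.mono' (g := fun _ => 2 / ((1 - (|x|+δ)^2) * Real.sqrt (1 - (|x|+δ)^2)))
        (integrableOn_const measure_Ioo_lt_top.ne)
      · apply Measurable.aestronglyMeasurable; fun_prop
      · filter_upwards [ae_restrict_mem measurableSet_Ioo] with t ht
        rw [norm_div, Real.norm_eq_abs, Real.norm_eq_abs, abs_of_pos ht.1, div_le_iff₀ ht.1]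
        exact near_bound hδ hxd hmpos ⟨ht.1, ht.2.le⟩
  rw [key, Kfun_eq x hδ, Kfun_zero]
  ring

lemma p_int (x : ℝ) : IntegrableOn (fun u : ℝ => (u + x)/Real.sqrt (1-u^2)) (Ioo (-1:ℝ) 1) := by
  apply (q_int.const_mul (1 + |x|)).mono'
  · apply Measurable.aestronglyMeasurable; fun_prop
  · filter_upwards [ae_restrict_mem measurableSet_Ioo] with u hu
    have hS : 0 < Real.sqrt (1-u^2) := Real.sqrt_pos.2 (by nlinarith [hu.1, hu.2])
    rw [norm_div, Real.norm_eq_abs, Real.norm_eq_abs, abs_of_pos hS]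
    rw [div_le_iff₀ hS]
    have h1 : |u + x| ≤ 1 + |x| := by
      calc |u + x| ≤ |u| + |x| := abs_add_le _ _
      _ ≤ 1 + |x| := by have := abs_le.2 ⟨hu.1.le, hu.2.le⟩; linarith
    have h2 : (1+|x|) * (1/Real.sqrt (1-u^2)) * Real.sqrt (1-u^2) = 1+|x| := by
      field_simp
    rw [h2]
    exact h1


lemma p_integral (x : ℝ) :
    ∫ u in Ioo (-1:ℝ) 1, (u + x)/Real.sqrt (1-u^2) = Real.pi * x := by
  rw [← integral_Ioc_eq_integral_Ioo, ← intervalIntegral.integral_of_le (by norm_num : (-1:ℝ) ≤ 1)]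
  have key : ∫ u in (-1:ℝ)..1, (u + x)/Real.sqrt (1-u^2)
      = (x * Real.arcsin 1 - Real.sqrt (1-(1:ℝ)^2)) -
        (x * Real.arcsin (-1) - Real.sqrt (1-(-1:ℝ)^2)) := by
    apply integral_eq_sub_of_hasDeriv_right_of_le
      (f := fun u : ℝ => x * Real.arcsin u - Real.sqrt (1-u^2)) (by norm_num)
    · apply ContinuousOn.sub
      · exact (continuous_const.mul Real.continuous_arcsin).continuousOn
      · apply Continuous.continuousOn; continuity
    · intro u hu
      have hS : 0 < Real.sqrt (1-u^2) := Real.sqrt_pos.2 (by nlinarith [hu.1, hu.2])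
      have hA := Real.hasDerivAt_arcsin (ne_of_gt hu.1) (ne_of_lt hu.2)
      have hd := (hA.const_mul x).sub (S_hasDeriv hu)
      have he : x * (1 / Real.sqrt (1-u^2)) - (-u / Real.sqrt (1-u^2))
          = (u + x)/Real.sqrt (1-u^2) := by
        field_simp
        ring
      rw [he] at hd
      exact hd.hasDerivWithinAt
    · rw [intervalIntegrable_iff_integrableOn_Ioo_of_le (by norm_num)]
      exact p_int x
  rw [key]
  norm_num [Real.arcsin_one, Real.arcsin_neg_one]
  ring

lemma ae_ne_pt {s : Set ℝ} (x : ℝ) : ∀ᵐ u : ℝ ∂(volume.restrict s), u ≠ x := by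
  apply ae_restrict_of_ae
  rw [ae_iff]
  have h : {u : ℝ | ¬ u ≠ x} = {x} := by ext; simp
  rw [h]
  exact measure_singleton x

lemma sq_pos_ne {a : ℝ} (h : a ≠ 0) : 0 < a^2 := by
  rcases h.lt_or_gt with h' | h' <;> nlinarith

lemma G_tendsto {x : ℝ} (hx : x ∈ Ioo (-1:ℝ) 1) :
    Tendsto (fun ε : ℝ => ∫ u in Ioo (-1:ℝ) 1, ε^2/(((u-x)^2+ε^2) * Real.sqrt (1-u^2)))
      (nhdsWithin 0 (Ioi 0)) (nhds 0) := by
  have key : Tendsto (fun ε : ℝ => ∫ u in Ioo (-1:ℝ) 1, ε^2/(((u-x)^2+ε^2) * Real.sqrt (1-u^2)))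
      (nhdsWithin 0 (Ioi 0)) (nhds (∫ u in Ioo (-1:ℝ) 1, (0:ℝ))) := by
    apply MeasureTheory.tendsto_integral_filter_of_dominated_convergence
      (bound := fun u : ℝ => 1 / Real.sqrt (1-u^2))
    · apply Eventually.of_forall
      intro ε
      apply Measurable.aestronglyMeasurable; fun_prop
    · filter_upwards [self_mem_nhdsWithin] with ε hε
      filter_upwards [ae_restrict_mem measurableSet_Ioo] with u hu
      have hS : 0 < Real.sqrt (1-u^2) := Real.sqrt_pos.2 (by nlinarith [hu.1, hu.2])
      have hε' : (0:ℝ) < ε := hε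
      have hD : 0 < (u-x)^2 + ε^2 := by positivity
      rw [Real.norm_eq_abs, abs_of_nonneg (by positivity), div_le_div_iff₀ (by positivity) hS]
      nlinarith [sq_nonneg (u-x), mul_pos hD hS]
    · exact q_int
    · filter_upwards [ae_restrict_mem measurableSet_Ioo, ae_ne_pt x] with u hu hne
      have hS : 0 < Real.sqrt (1-u^2) := Real.sqrt_pos.2 (by nlinarith [hu.1, hu.2])
      have hd : ((u-x)^2 + (0:ℝ)^2) * Real.sqrt (1-u^2) ≠ 0 := by
        have := sq_pos_ne (sub_ne_zero.2 hne)
        positivity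
      have hc1 : ContinuousAt (fun ε : ℝ => ε^2) 0 := by fun_prop
      have hc2 : ContinuousAt (fun ε : ℝ => ((u-x)^2+ε^2) * Real.sqrt (1-u^2)) 0 := by fun_prop
      have hc := hc1.div hc2 (by simpa using hd)
      have h2 := hc.tendsto.mono_left (nhdsWithin_le_nhds (s := Ioi (0:ℝ)))
      simp only [Pi.div_apply] at h2
      simpa [Pi.div_def] using h2
  simpa using key

noncomputable def ek (x ε u : ℝ) : ℝ := (u-x)/(((u-x)^2+ε^2) * Real.sqrt (1-u^2))

lemma ek_int {x ε : ℝ} (hε : 0 < ε) {s : Set ℝ} (hs : MeasurableSet s)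
    (hsub : s ⊆ Ioo (-1:ℝ) 1) : IntegrableOn (ek x ε) s := by
  apply ((q_int.mono_set hsub).const_mul (1/(2*ε))).mono'
  · apply Measurable.aestronglyMeasurable; unfold ek; fun_prop
  · filter_upwards [ae_restrict_mem hs] with u hu
    have hu' := hsub hu
    have hS : 0 < Real.sqrt (1-u^2) := Real.sqrt_pos.2 (by nlinarith [hu'.1, hu'.2])
    have hD : 0 < (u-x)^2 + ε^2 := by positivity
    unfold ek
    rw [Real.norm_eq_abs, abs_div, abs_of_pos (by positivity : (0:ℝ) < ((u-x)^2+ε^2) * Real.sqrt (1-u^2))]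
    rw [div_le_iff₀ (by positivity)]
    have he : 1/(2*ε) * (1/Real.sqrt (1-u^2)) * (((u-x)^2+ε^2) * Real.sqrt (1-u^2))
        = ((u-x)^2+ε^2)/(2*ε) := by field_simp
    rw [he, le_div_iff₀ (by positivity)]
    nlinarith [sq_abs (u-x), sq_nonneg (|u-x| - ε)]

lemma ek_split {x δ ε : ℝ} (hδ : 0 < δ) (ha1 : -1 < x - δ) (hb1 : x + δ < 1) (hε : 0 < ε) :
    ∫ u in Ioo (-1:ℝ) 1, ek x ε u =
      (∫ u in Ioo (-1:ℝ) (x-δ), ek x ε u) +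
      (∫ t in Ioo (0:ℝ) δ, (t/(t^2+ε^2)) * (1/Real.sqrt (1-(x+t)^2) - 1/Real.sqrt (1-(x-t)^2))) +
      (∫ u in Ioo (x+δ) 1, ek x ε u) := by
  have hsub1 : Ioo (-1:ℝ) (x-δ) ⊆ Ioo (-1:ℝ) 1 := Ioo_subset_Ioo le_rfl (by linarith)
  have hsub2 : Ioo (x-δ) (x+δ) ⊆ Ioo (-1:ℝ) 1 := Ioo_subset_Ioo (by linarith) (by linarith)
  have hsub3 : Ioo (x+δ) (1:ℝ) ⊆ Ioo (-1:ℝ) 1 := Ioo_subset_Ioo (by linarith) le_rfl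
  have hi1 : IntervalIntegrable (ek x ε) volume (-1) (x-δ) := by
    rw [intervalIntegrable_iff_integrableOn_Ioo_of_le (by linarith)]
    exact ek_int hε measurableSet_Ioo hsub1
  have hi2 : IntervalIntegrable (ek x ε) volume (x-δ) (x+δ) := by
    rw [intervalIntegrable_iff_integrableOn_Ioo_of_le (by linarith)]
    exact ek_int hε measurableSet_Ioo hsub2
  have hi3 : IntervalIntegrable (ek x ε) volume (x+δ) 1 := by
    rw [intervalIntegrable_iff_integrableOn_Ioo_of_le (by linarith)]
    exact ek_int hε measurableSet_Ioo hsub3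
  have hIoo : ∀ a b : ℝ, a ≤ b → ∫ u in a..b, ek x ε u = ∫ u in Ioo a b, ek x ε u := by
    intro a b hab
    rw [intervalIntegral.integral_of_le hab, integral_Ioc_eq_integral_Ioo]
  have hsplit : ∫ u in Ioo (-1:ℝ) 1, ek x ε u =
      (∫ u in Ioo (-1:ℝ) (x-δ), ek x ε u) + (∫ u in (x-δ)..(x+δ), ek x ε u) +
      (∫ u in Ioo (x+δ) 1, ek x ε u) := by
    rw [← hIoo (-1) 1 (by linarith), ← hIoo (-1) (x-δ) (by linarith), ← hIoo (x+δ) 1 (by linarith)]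
    rw [← intervalIntegral.integral_add_adjacent_intervals (b := x-δ) hi1 (hi2.trans hi3)]
    rw [← intervalIntegral.integral_add_adjacent_intervals (a := x-δ) (b := x+δ) hi2 hi3]
    ring
  rw [hsplit]
  congr 1
  congr 1
  -- middle piece
  have hmid : ∫ u in (x-δ)..(x+δ), ek x ε u = ∫ t in (-δ)..δ, ek x ε (x + t) := by
    rw [intervalIntegral.integral_comp_add_left (fun u => ek x ε u) x]
    rw [show x + -δ = x - δ by ring]
  have hci : IntervalIntegrable (fun t => ek x ε (x + t)) volume (-δ) δ := by
    have := hi2.comp_add_left x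
    simpa using this
  have hneg : ∫ t in (-δ)..(0:ℝ), ek x ε (x + t) = ∫ t in (0:ℝ)..δ, ek x ε (x + -t) := by
    rw [intervalIntegral.integral_comp_neg (fun t => ek x ε (x + t))]
    norm_num
  have hnegInt : IntervalIntegrable (fun t => ek x ε (x + -t)) volume 0 δ := by
    have h1 : IntervalIntegrable (fun t => ek x ε (x + t)) volume (-δ) 0 :=
      hci.mono_set (by
        rw [uIcc_of_le (show -δ ≤ (0:ℝ) by linarith), uIcc_of_le (show -δ ≤ δ by linarith)]
        exact Icc_subset_Icc le_rfl hδ.le)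
    have h2 := (IntervalIntegrable.iff_comp_neg (f := fun t => ek x ε (x + t))).1 h1
    simpa using h2.symm
  have hposInt : IntervalIntegrable (fun t => ek x ε (x + t)) volume 0 δ :=
    hci.mono_set (by
      rw [uIcc_of_le hδ.le, uIcc_of_le (show -δ ≤ δ by linarith)]
      exact Icc_subset_Icc (by linarith) le_rfl)
  have hmidInt : IntervalIntegrable (fun t => ek x ε (x + t)) volume (-δ) 0 :=
    hci.mono_set (by
      rw [uIcc_of_le (show -δ ≤ (0:ℝ) by linarith), uIcc_of_le (show -δ ≤ δ by linarith)]
      exact Icc_subset_Icc le_rfl hδ.le)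
  rw [hmid, ← intervalIntegral.integral_add_adjacent_intervals (b := (0:ℝ)) hmidInt
      hposInt, hneg, ← intervalIntegral.integral_add hnegInt hposInt]
  rw [intervalIntegral.integral_of_le hδ.le, integral_Ioc_eq_integral_Ioo]
  apply setIntegral_congr_fun measurableSet_Ioo
  intro t ht
  have hp : (x+t) ∈ Ioo (-1:ℝ) 1 := ⟨by linarith [ht.1], by linarith [ht.2]⟩
  have hq : (x-t) ∈ Ioo (-1:ℝ) 1 := ⟨by linarith [ht.2], by linarith [ht.1]⟩
  have hSp : 0 < Real.sqrt (1-(x+t)^2) := Real.sqrt_pos.2 (by nlinarith [hp.1, hp.2])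
  have hSm : 0 < Real.sqrt (1-(x-t)^2) := Real.sqrt_pos.2 (by nlinarith [hq.1, hq.2])
  have hD : (0:ℝ) < t^2 + ε^2 := by positivity
  simp only
  unfold ek
  rw [show x + -t - x = -t by ring, show x + t - x = t by ring, show x + -t = x - t by ring]
  rw [show (-t)^2 = t^2 by ring]
  field_simp
  ring

lemma far_tendsto {x δ a b : ℝ} (hδ : 0 < δ) (hsub : Ioo a b ⊆ Ioo (-1:ℝ) 1)
    (hdist : ∀ u ∈ Ioo a b, δ ≤ |u - x|) :
    Tendsto (fun ε : ℝ => ∫ u in Ioo a b, ek x ε u) (nhdsWithin 0 (Ioi 0))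
      (nhds (∫ u in Ioo a b, 1/((u-x) * Real.sqrt (1-u^2)))) := by
  apply MeasureTheory.tendsto_integral_filter_of_dominated_convergence
    (bound := fun u : ℝ => 1/δ * (1/Real.sqrt (1-u^2)))
  · apply Eventually.of_forall
    intro ε
    apply Measurable.aestronglyMeasurable; unfold ek; fun_prop
  · apply Eventually.of_forall
    intro ε
    filter_upwards [ae_restrict_mem measurableSet_Ioo] with u hu
    have hu' := hsub hu
    have hS : 0 < Real.sqrt (1-u^2) := Real.sqrt_pos.2 (by nlinarith [hu'.1, hu'.2])
    have hdu : δ ≤ |u - x| := hdist u hu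
    have hD : 0 < (u-x)^2 + ε^2 := by nlinarith [sq_abs (u-x), sq_nonneg ε]
    unfold ek
    rw [Real.norm_eq_abs, abs_div, abs_of_pos (mul_pos hD hS), div_le_iff₀ (mul_pos hD hS)]
    have he : 1/δ * (1/Real.sqrt (1-u^2)) * (((u-x)^2+ε^2) * Real.sqrt (1-u^2))
        = ((u-x)^2+ε^2)/δ := by field_simp
    rw [he, le_div_iff₀ hδ]
    nlinarith [sq_abs (u-x), abs_nonneg (u-x), sq_nonneg ε]
  · exact (q_int.mono_set hsub).const_mul _
  · filter_upwards [ae_restrict_mem measurableSet_Ioo] with u hu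
    have hu' := hsub hu
    have hS : 0 < Real.sqrt (1-u^2) := Real.sqrt_pos.2 (by nlinarith [hu'.1, hu'.2])
    have hne : u - x ≠ 0 := by
      intro h
      have hd := hdist u hu
      rw [h] at hd; simp at hd; linarith
    have hd : ((u-x)^2 + (0:ℝ)^2) * Real.sqrt (1-u^2) ≠ 0 := by
      have := sq_pos_ne hne
      positivity
    have hc1 : ContinuousAt (fun ε : ℝ => u - x) 0 := by fun_prop
    have hc2 : ContinuousAt (fun ε : ℝ => ((u-x)^2+ε^2) * Real.sqrt (1-u^2)) 0 := by fun_prop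
    have hc := hc1.div hc2 (by simpa using hd)
    have h2 := hc.tendsto.mono_left (nhdsWithin_le_nhds (s := Ioi (0:ℝ)))
    simp only [Pi.div_def] at h2
    unfold ek
    convert h2 using 2
    have := sq_pos_ne hne
    field_simp
    ring

lemma near_tendsto {x δ : ℝ} (hδ : 0 < δ) (hxd : |x| + δ < 1)
    (hmpos : 0 < 1 - (|x|+δ)^2) :
    Tendsto (fun ε : ℝ =>
        ∫ t in Ioo (0:ℝ) δ, (t/(t^2+ε^2)) * (1/Real.sqrt (1-(x+t)^2) - 1/Real.sqrt (1-(x-t)^2)))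
      (nhdsWithin 0 (Ioi 0))
      (nhds (∫ t in Ioo (0:ℝ) δ, (1/Real.sqrt (1-(x+t)^2) - 1/Real.sqrt (1-(x-t)^2)) / t)) := by
  apply MeasureTheory.tendsto_integral_filter_of_dominated_convergence
    (bound := fun _ : ℝ => 2 / ((1 - (|x|+δ)^2) * Real.sqrt (1 - (|x|+δ)^2)))
  · apply Eventually.of_forall
    intro ε
    apply Measurable.aestronglyMeasurable; fun_prop
  · apply Eventually.of_forall
    intro ε
    filter_upwards [ae_restrict_mem measurableSet_Ioo] with t ht
    have hD : 0 < t^2 + ε^2 := by nlinarith [ht.1, sq_nonneg ε]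
    have hC : 0 < 2 / ((1 - (|x|+δ)^2) * Real.sqrt (1 - (|x|+δ)^2)) := by
      have := Real.sqrt_pos.2 hmpos
      positivity
    have ht0 : (0:ℝ) ≤ t/(t^2+ε^2) := div_nonneg ht.1.le hD.le
    rw [norm_mul, Real.norm_eq_abs, Real.norm_eq_abs, abs_of_nonneg ht0]
    have hb := near_bound hδ hxd hmpos ⟨ht.1, ht.2.le⟩
    calc t/(t^2+ε^2) * |1/Real.sqrt (1-(x+t)^2) - 1/Real.sqrt (1-(x-t)^2)|
        ≤ t/(t^2+ε^2) * (2 / ((1 - (|x|+δ)^2) * Real.sqrt (1 - (|x|+δ)^2)) * t) := by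
          apply mul_le_mul_of_nonneg_left hb ht0
    _ = (2 / ((1 - (|x|+δ)^2) * Real.sqrt (1 - (|x|+δ)^2))) * (t^2/(t^2+ε^2)) := by
          field_simp
    _ ≤ (2 / ((1 - (|x|+δ)^2) * Real.sqrt (1 - (|x|+δ)^2))) * 1 := by
          apply mul_le_mul_of_nonneg_left _ hC.le
          rw [div_le_one hD]
          nlinarith [sq_nonneg ε]
    _ = 2 / ((1 - (|x|+δ)^2) * Real.sqrt (1 - (|x|+δ)^2)) := mul_one _
  · exact integrableOn_const measure_Ioo_lt_top.ne
  · filter_upwards [ae_restrict_mem measurableSet_Ioo] with t ht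
    have htpos : 0 < t := ht.1
    have hd : (t^2 + (0:ℝ)^2) ≠ 0 := by positivity
    have hc1 : ContinuousAt (fun ε : ℝ => t) 0 := by fun_prop
    have hc2 : ContinuousAt (fun ε : ℝ => t^2+ε^2) 0 := by fun_prop
    have hc := (hc1.div hc2 (by simpa using hd)).mul
      (continuousAt_const (y := 1/Real.sqrt (1-(x+t)^2) - 1/Real.sqrt (1-(x-t)^2)))
    have h2 := hc.tendsto.mono_left (nhdsWithin_le_nhds (s := Ioi (0:ℝ)))
    simp only [Pi.div_def, Pi.mul_def] at h2
    convert h2 using 2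
    field_simp
    ring

lemma E_tendsto {x : ℝ} (hx : x ∈ Ioo (-1:ℝ) 1) :
    Tendsto (fun ε : ℝ => ∫ u in Ioo (-1:ℝ) 1, ek x ε u) (nhdsWithin 0 (Ioi 0)) (nhds 0) := by
  obtain ⟨hx1, hx2⟩ := hx
  have hxlt : |x| < 1 := abs_lt.2 ⟨hx1, hx2⟩
  set δ := (1 - |x|)/2 with hδdef
  have hδ : 0 < δ := by rw [hδdef]; linarith
  have hxd : |x| + δ < 1 := by rw [hδdef]; linarith
  have hmpos : 0 < 1 - (|x|+δ)^2 := by nlinarith [abs_nonneg x]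
  have ha1 : -1 < x - δ := by nlinarith [neg_abs_le x]
  have hb1 : x + δ < 1 := by nlinarith [le_abs_self x]
  have hsub1 : Ioo (-1:ℝ) (x-δ) ⊆ Ioo (-1:ℝ) 1 := Ioo_subset_Ioo le_rfl (by linarith)
  have hsub3 : Ioo (x+δ) (1:ℝ) ⊆ Ioo (-1:ℝ) 1 := Ioo_subset_Ioo (by linarith) le_rfl
  have hL1 := far_tendsto (x := x) hδ hsub1 (fun u hu => by
    rw [abs_sub_comm, abs_of_nonneg (by linarith [hu.2])]
    linarith [hu.2])
  have hL3 := far_tendsto (x := x) hδ hsub3 (fun u hu => by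
    rw [abs_of_nonneg (by linarith [hu.1])]
    linarith [hu.1])
  have hL2 := near_tendsto hδ hxd hmpos
  -- Values of the limit integrals
  have hval1 : ∫ u in Ioo (-1:ℝ) (x-δ), 1/((u-x) * Real.sqrt (1-u^2)) = Hfun x (x-δ) := by
    rw [← integral_Ioc_eq_integral_Ioo, ← intervalIntegral.integral_of_le (by linarith : (-1:ℝ) ≤ x-δ)]
    rw [intH ⟨hx1, hx2⟩ le_rfl (by linarith) (by linarith) hδ ?_]
    · rw [Hfun_neg_one ⟨hx1, hx2⟩]; ring
    · intro u hu
      rw [abs_sub_comm, abs_of_nonneg (by linarith [hu.2])]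
      linarith [hu.2]
  have hval3 : ∫ u in Ioo (x+δ) (1:ℝ), 1/((u-x) * Real.sqrt (1-u^2)) = - Hfun x (x+δ) := by
    rw [← integral_Ioc_eq_integral_Ioo, ← intervalIntegral.integral_of_le (by linarith : x+δ ≤ 1)]
    rw [intH ⟨hx1, hx2⟩ (by linarith) (by linarith) le_rfl hδ ?_]
    · rw [Hfun_one ⟨hx1, hx2⟩]; ring
    · intro u hu
      rw [abs_of_nonneg (by linarith [hu.1])]
      linarith [hu.1]
  have hval2 : ∫ t in Ioo (0:ℝ) δ, (1/Real.sqrt (1-(x+t)^2) - 1/Real.sqrt (1-(x-t)^2)) / t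
      = Hfun x (x+δ) - Hfun x (x-δ) := by
    rw [← integral_Ioc_eq_integral_Ioo, ← intervalIntegral.integral_of_le hδ.le]
    exact near_int ⟨hx1, hx2⟩ hδ hxd
  have hsum := (hL1.add hL2).add hL3
  rw [hval1, hval2, hval3] at hsum
  have hzero : Hfun x (x-δ) + (Hfun x (x+δ) - Hfun x (x-δ)) + -Hfun x (x+δ) = 0 := by ring
  rw [hzero] at hsum
  apply hsum.congr'
  filter_upwards [self_mem_nhdsWithin] with ε hε
  exact (ek_split hδ ha1 hb1 hε).symm

lemma gg_int {x ε : ℝ} :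
    IntegrableOn (fun u : ℝ => ε^2/(((u-x)^2+ε^2) * Real.sqrt (1-u^2))) (Ioo (-1:ℝ) 1) := by
  apply q_int.mono'
  · apply Measurable.aestronglyMeasurable; fun_prop
  · filter_upwards [ae_restrict_mem measurableSet_Ioo] with u hu
    have hS : 0 < Real.sqrt (1-u^2) := Real.sqrt_pos.2 (by nlinarith [hu.1, hu.2])
    rcases eq_or_ne (((u-x)^2+ε^2)) 0 with h | h
    · rw [h, zero_mul, div_zero, norm_zero]
      positivity
    · have hD : 0 < (u-x)^2 + ε^2 := lt_of_le_of_ne (by positivity) (Ne.symm h)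
      rw [Real.norm_eq_abs, abs_of_nonneg (by positivity), div_le_div_iff₀ (by positivity) hS]
      nlinarith [sq_nonneg (u-x), mul_pos hD hS]

lemma main_eq {x ε : ℝ} (hx : x ∈ Ioo (-1:ℝ) 1) (hε : 0 < ε) :
    2 * ∫ u in Ioo (-1:ℝ) 1, (x - u) * (2 / Real.pi * Real.sqrt (1 - u ^ 2)) / ((x - u) ^ 2 + ε ^ 2)
      = 4/Real.pi * (Real.pi * x + ((x^2-1-ε^2) * (∫ u in Ioo (-1:ℝ) 1, ek x ε u)
          - 2*x * (∫ u in Ioo (-1:ℝ) 1, ε^2/(((u-x)^2+ε^2) * Real.sqrt (1-u^2))))) := by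
  have hek := ek_int (x := x) hε measurableSet_Ioo (subset_rfl)
  have hcongr : EqOn
      (fun u : ℝ => (x - u) * (2 / Real.pi * Real.sqrt (1 - u ^ 2)) / ((x - u) ^ 2 + ε ^ 2))
      (fun u : ℝ => 2/Real.pi * ((u+x)/Real.sqrt (1-u^2)
        + ((x^2-1-ε^2) * ek x ε u - 2*x * (ε^2/(((u-x)^2+ε^2) * Real.sqrt (1-u^2))))))
      (Ioo (-1:ℝ) 1) := by
    intro u hu
    have hS : 0 < Real.sqrt (1-u^2) := Real.sqrt_pos.2 (by nlinarith [hu.1, hu.2])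
    have hS2 : Real.sqrt (1-u^2)^2 = 1-u^2 := Real.sq_sqrt (by nlinarith [hu.1, hu.2])
    have hD : 0 < (u-x)^2 + ε^2 := by positivity
    have hD' : 0 < (x-u)^2 + ε^2 := by positivity
    have hπ : Real.pi ≠ 0 := Real.pi_ne_zero
    simp only [ek]
    field_simp
    linear_combination ((x-u)*((u-x)^2+ε^2)) * hS2
  have hekc : Integrable (fun a : ℝ => (x^2-1-ε^2) * ek x ε a)
      (volume.restrict (Ioo (-1:ℝ) 1)) := hek.const_mul _
  have hggc : Integrable (fun a : ℝ => 2*x * (ε^2/(((a-x)^2+ε^2) * Real.sqrt (1-a^2))))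
      (volume.restrict (Ioo (-1:ℝ) 1)) := (gg_int (x := x) (ε := ε)).const_mul _
  have h2 : Integrable (fun a : ℝ => (x^2-1-ε^2) * ek x ε a
      - 2*x * (ε^2/(((a-x)^2+ε^2) * Real.sqrt (1-a^2))))
      (volume.restrict (Ioo (-1:ℝ) 1)) := hekc.sub hggc
  rw [setIntegral_congr_fun measurableSet_Ioo hcongr]
  rw [MeasureTheory.integral_const_mul]
  rw [MeasureTheory.integral_add (p_int x) h2]
  rw [MeasureTheory.integral_sub hekc hggc]
  rw [MeasureTheory.integral_const_mul, MeasureTheory.integral_const_mul]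
  rw [p_integral x]
  ring

/-- For the Chebyshev density of the second kind
`ρ(x) = (2/π)√(1−x²)` on `(−1,1)`: the first moment is `0`, the reducer is
`φ(x) = 4x`, and the secondary density `μ(x) = ρ(x)/(φ²/4 + π²ρ²) = ρ(x)/4`. -/
theorem stmt_6 :
    (∫ x in Ioo (-1 : ℝ) 1, x * (2 / Real.pi * Real.sqrt (1 - x ^ 2)) = 0) ∧
    (∀ x ∈ Ioo (-1 : ℝ) 1,
      Tendsto (fun ε : ℝ =>
          2 * ∫ u in Ioo (-1 : ℝ) 1,
            (x - u) * (2 / Real.pi * Real.sqrt (1 - u ^ 2)) / ((x - u) ^ 2 + ε ^ 2))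
        (nhdsWithin 0 (Ioi 0)) (nhds (4 * x))) ∧
    (∀ x ∈ Ioo (-1 : ℝ) 1,
      (2 / Real.pi * Real.sqrt (1 - x ^ 2)) /
          ((4 * x) ^ 2 / 4 + Real.pi ^ 2 * (2 / Real.pi * Real.sqrt (1 - x ^ 2)) ^ 2)
        = (2 / Real.pi * Real.sqrt (1 - x ^ 2)) / 4) := by
  refine ⟨?_, ?_, ?_⟩
  · -- first moment is zero
    rw [← integral_Ioc_eq_integral_Ioo, ← intervalIntegral.integral_of_le (by norm_num : (-1:ℝ) ≤ 1)]
    set f := fun y : ℝ => y * (2 / Real.pi * Real.sqrt (1 - y ^ 2)) with hf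
    have h1 : ∫ y in (-1:ℝ)..1, f (-y) = ∫ y in (-1:ℝ)..1, f y := by
      simpa using intervalIntegral.integral_comp_neg (a := -1) (b := 1) f
    have h2 : ∫ y in (-1:ℝ)..1, f (-y) = - ∫ y in (-1:ℝ)..1, f y := by
      have hodd : ∀ y : ℝ, f (-y) = - f y := by
        intro y
        simp only [hf]
        rw [show (-y:ℝ)^2 = y^2 by ring]
        ring
      simp_rw [hodd]
      exact intervalIntegral.integral_neg
    have := h1.symm.trans h2
    linarith
  · -- the reducer limit
    intro x hx
    have hE := E_tendsto hx
    have hG := G_tendsto hx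
    have hπ : Real.pi ≠ 0 := Real.pi_ne_zero
    have hcoef : Tendsto (fun ε : ℝ => x^2-1-ε^2) (nhdsWithin 0 (Ioi 0)) (nhds (x^2-1)) := by
      have hc : ContinuousAt (fun ε : ℝ => x^2-1-ε^2) 0 := by fun_prop
      have := hc.tendsto.mono_left (nhdsWithin_le_nhds (s := Ioi (0:ℝ)))
      simpa using this
    have hmain : Tendsto (fun ε : ℝ => 4/Real.pi * (Real.pi * x + ((x^2-1-ε^2)
        * (∫ u in Ioo (-1:ℝ) 1, ek x ε u)
        - 2*x * (∫ u in Ioo (-1:ℝ) 1, ε^2/(((u-x)^2+ε^2) * Real.sqrt (1-u^2))))))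
        (nhdsWithin 0 (Ioi 0))
        (nhds (4/Real.pi * (Real.pi * x + ((x^2-1) * 0 - 2*x * 0)))) := by
      apply Tendsto.const_mul
      apply Tendsto.add tendsto_const_nhds
      exact (hcoef.mul hE).sub (hG.const_mul (2*x))
    have hval : 4/Real.pi * (Real.pi * x + ((x^2-1) * 0 - 2*x * 0)) = 4 * x := by
      field_simp
      ring
    rw [hval] at hmain
    apply hmain.congr'
    filter_upwards [self_mem_nhdsWithin] with ε hε
    exact (main_eq hx hε).symm
  · -- the secondary density
    intro x hx
    have hS2 : Real.sqrt (1-x^2)^2 = 1-x^2 := Real.sq_sqrt (by nlinarith [hx.1, hx.2])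
    have hπ : Real.pi ≠ 0 := Real.pi_ne_zero
    have hden : (4*x)^2/4 + Real.pi^2 * (2/Real.pi * Real.sqrt (1-x^2))^2 = 4 := by
      field_simp
      linear_combination 4 * hS2
    rw [show (1:ℝ) - x^2 = 1 - x^2 by ring] at *
    rw [hden]
end

section
/- The reducer of the density ρ(x) = 2x on (0,1) is φ(x) = −4x·ln((1−x)/x) − 4 for x ∈ (0,1). -/
open MeasureTheory Set Filter

/-- The reducer of the density `ρ(x) = 2x` on `(0,1)` is
`φ(x) = −4x·ln((1−x)/x) − 4`. -/
theorem stmt_8 :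
    ∀ x ∈ Ioo (0 : ℝ) 1,
      Tendsto (fun ε : ℝ =>
          2 * ∫ u in Ioo (0 : ℝ) 1, (x - u) * (2 * u) / ((x - u) ^ 2 + ε ^ 2))
        (nhdsWithin 0 (Ioi 0)) (nhds (-4 * x * Real.log ((1 - x) / x) - 4)) := by
  rintro x ⟨hx0, hx1⟩
  have hx1' : (0:ℝ) < 1 - x := by linarith
  have hxm1 : x - 1 ≠ 0 := by linarith
  -- explicit value of the integral for ε > 0
  have key : ∀ ε : ℝ, ε ∈ Ioi (0:ℝ) →
      (∫ u in Ioo (0:ℝ) 1, (x - u) * (2 * u) / ((x - u) ^ 2 + ε ^ 2))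
        = x * Real.log ((x^2 + ε^2) / ((x-1)^2 + ε^2)) - 2
          + 2*ε*(Real.arctan (x/ε) - Real.arctan ((x-1)/ε)) := by
    intro ε hε
    rw [mem_Ioi] at hε
    have hεne : ε ≠ 0 := ne_of_gt hε
    have hne : ∀ u : ℝ, (x - u)^2 + ε^2 ≠ 0 := fun u => by positivity
    set G : ℝ → ℝ := fun u => -x * Real.log ((x-u)^2 + ε^2) + 2*(x-u)
        - 2*ε*Real.arctan ((x-u)/ε) with hG
    have hderiv : ∀ u ∈ uIcc (0:ℝ) 1,
        HasDerivAt G ((x - u) * (2 * u) / ((x - u) ^ 2 + ε ^ 2)) u := by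
      intro u _
      have hinner : HasDerivAt (fun y : ℝ => x - y) (-1) u :=
        (hasDerivAt_id u).const_sub x
      have h1 : HasDerivAt (fun y : ℝ => (x-y)^2 + ε^2)
          (2*(x-u)^1*(-1)) u := by
        simpa using (hinner.pow 2).add_const (ε^2)
      have h2 : HasDerivAt (fun y : ℝ => -x * Real.log ((x-y)^2 + ε^2))
          (-x * ((2*(x-u)^1*(-1)) / ((x-u)^2 + ε^2))) u :=
        (h1.log (hne u)).const_mul (-x)
      have h3 : HasDerivAt (fun y : ℝ => 2*(x-y)) (2*(-1)) u :=
        hinner.const_mul 2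
      have h4 : HasDerivAt (fun y : ℝ => 2*ε*Real.arctan ((x-y)/ε))
          (2*ε*(1 / (1 + ((x-u)/ε)^2) * (-1/ε))) u := by
        have hin : HasDerivAt (fun y : ℝ => (x-y)/ε) (-1/ε) u := hinner.div_const ε
        exact (hin.arctan).const_mul (2*ε)
      have := (h2.add h3).sub h4
      convert this using 1
      any_goals rfl
      have hden : 1 + ((x-u)/ε)^2 ≠ 0 := by positivity
      rw [div_eq_iff (hne u)]
      field_simp
      ring
    have hcont : Continuous (fun u : ℝ => (x - u) * (2 * u) / ((x - u) ^ 2 + ε ^ 2)) := by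
      apply Continuous.div
      · fun_prop
      · fun_prop
      · exact hne
    have hint : (∫ u in Ioo (0:ℝ) 1, (x - u) * (2 * u) / ((x - u) ^ 2 + ε ^ 2))
        = ∫ u in (0:ℝ)..1, (x - u) * (2 * u) / ((x - u) ^ 2 + ε ^ 2) := by
      rw [intervalIntegral.integral_of_le zero_le_one,
        integral_Ioc_eq_integral_Ioo]
    rw [hint, intervalIntegral.integral_eq_sub_of_hasDerivAt hderiv
      (hcont.intervalIntegrable _ _)]
    simp only [hG]
    rw [Real.log_div (by positivity) (by positivity), sub_zero]
    ring
  -- limit of the explicit formula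
  have hd0 : ((x-1)^2 + (0:ℝ)^2) ≠ 0 := by positivity
  have hx2 : (x:ℝ)^2 / (x-1)^2 ≠ 0 := by positivity
  have h1 : Tendsto (fun ε : ℝ => x * Real.log ((x^2+ε^2)/((x-1)^2+ε^2)) - 2)
      (nhdsWithin 0 (Ioi 0)) (nhds (x * Real.log (x^2/(x-1)^2) - 2)) := by
    have hc : ContinuousAt (fun ε : ℝ => x * Real.log ((x^2+ε^2)/((x-1)^2+ε^2)) - 2) 0 := by
      apply ContinuousAt.sub _ continuousAt_const
      apply ContinuousAt.mul continuousAt_const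
      apply ContinuousAt.log
      · exact ContinuousAt.div (by fun_prop) (by fun_prop) hd0
      · simpa using hx2
    have := hc.tendsto.mono_left (nhdsWithin_le_nhds (s := Ioi (0:ℝ)))
    simpa using this
  have h2 : Tendsto (fun ε : ℝ => 2*ε*(Real.arctan (x/ε) - Real.arctan ((x-1)/ε)))
      (nhdsWithin 0 (Ioi 0)) (nhds 0) := by
    apply squeeze_zero_norm' (a := fun ε : ℝ => 2 * |ε| * Real.pi)
    · filter_upwards with ε
      have hb : ∀ y : ℝ, |Real.arctan y| ≤ Real.pi/2 := fun y =>
        le_of_lt (abs_lt.mpr ⟨Real.neg_pi_div_two_lt_arctan y, Real.arctan_lt_pi_div_two y⟩)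
      have : |Real.arctan (x/ε) - Real.arctan ((x-1)/ε)| ≤ Real.pi := by
        calc |Real.arctan (x/ε) - Real.arctan ((x-1)/ε)|
            ≤ |Real.arctan (x/ε)| + |Real.arctan ((x-1)/ε)| := abs_sub _ _
          _ ≤ Real.pi/2 + Real.pi/2 := add_le_add (hb _) (hb _)
          _ = Real.pi := by ring
      calc ‖2*ε*(Real.arctan (x/ε) - Real.arctan ((x-1)/ε))‖
          = 2 * |ε| * |Real.arctan (x/ε) - Real.arctan ((x-1)/ε)| := by
            rw [Real.norm_eq_abs, abs_mul, abs_mul]; simp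
        _ ≤ 2 * |ε| * Real.pi := by
            apply mul_le_mul_of_nonneg_left this (by positivity)
    · have : Tendsto (fun ε : ℝ => 2 * |ε| * Real.pi) (nhds 0) (nhds (2 * |(0:ℝ)| * Real.pi)) := by
        apply Continuous.tendsto
        fun_prop
      simp at this
      exact this.mono_left nhdsWithin_le_nhds
  have hsum := (h1.add h2).const_mul 2
  rw [add_zero] at hsum
  have hfin : 2 * (x * Real.log (x^2/(x-1)^2) - 2)
      = -4 * x * Real.log ((1 - x) / x) - 4 := by
    have e1 : Real.log (x^2/(x-1)^2) = 2*Real.log x - 2*Real.log (1-x) := by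
      rw [Real.log_div (by positivity) (by positivity), Real.log_pow, Real.log_pow,
        show x - 1 = -(1-x) by ring, Real.log_neg_eq_log]
      push_cast; ring
    have e2 : Real.log ((1-x)/x) = Real.log (1-x) - Real.log x :=
      Real.log_div (by positivity) (by positivity)
    rw [e1, e2]; ring
  rw [hfin] at hsum
  apply hsum.congr'
  filter_upwards [self_mem_nhdsWithin] with ε hε
  rw [key ε hε]
end

section
/- Let T(f)(x) = (2/π)∫_{−1}^{1}(f(u)−f(x))√(1−u²)/(u−x) du and T₂(g)(x) = (1/π)∫_{−1}^{1}(g(u)−g(x))/((u−x)√(1−u²)) du be the secondary operators for the Chebyshev weights of second and first kind. Then for every polynomial f with ∫_{−1}^{1} f(x)·(2/π)√(1−x²) dx = 0, applying V(h)(x) = h(x) − (x/2)T(h)(x) after W(g)(x) = g(x) + x·T₂(g)(x) recovers f: V(W(f)) = f. Equivalently, the solution of f(x) − (x/π)∫_{−1}^{1}(f(u)−f(x))√(1−u²)/(u−x) du = g(x) is f(x) = g(x) + (x/π)∫_{−1}^{1}(g(u)−g(x))/((u−x)√(1−u²)) du. -/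
open MeasureTheory Set
open Polynomial Real Finset


noncomputable def Mi (i : ℕ) : ℝ := ∫ θ in Ioo (0:ℝ) π, Real.cos θ ^ i
lemma Mi_eq (i : ℕ) : Mi i = ∫ x in (0:ℝ)..π, Real.cos x ^ i := by
  rw [intervalIntegral.integral_of_le Real.pi_pos.le, Mi,
    MeasureTheory.integral_Ioc_eq_integral_Ioo]
lemma Mi_zero : Mi 0 = π := by simp [Mi_eq]
lemma Mi_one : Mi 1 = 0 := by simp [Mi_eq]
lemma Mi_rec (k : ℕ) : Mi (k+2) = (k+1)/(k+2) * Mi k := by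
  rw [Mi_eq, Mi_eq, integral_cos_pow]; simp [Real.sin_pi]

noncomputable def m (k : ℕ) : ℝ := Mi k / π

lemma m_zero : m 0 = 1 := by rw [m, Mi_zero, div_self Real.pi_ne_zero]
lemma m_one : m 1 = 0 := by rw [m, Mi_one, zero_div]
lemma m_rec (k : ℕ) : (k+2 : ℝ) * m (k+2) = (k+1) * m k := by
  rw [m, m, Mi_rec]
  have : ((k:ℝ)+2) ≠ 0 := by positivity
  field_simp
lemma m_two : m 2 = 1/2 := by
  have := m_rec 0
  rw [m_zero] at this
  norm_num at this
  linarith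

noncomputable def P (k : ℕ) : ℝ := ∑ i ∈ range (k+1), m i * m (k - i)
noncomputable def B (k : ℕ) : ℝ := ∑ i ∈ range (k+1), (i:ℝ) * m i * m (k - i)

lemma two_B (k : ℕ) : 2 * B k = k * P k := by
  have h := Finset.sum_range_reflect (fun i => (i:ℝ) * m i * m (k - i)) (k+1)
  -- h : ∑ j in range (k+1), ((k+1-1-j)) * m (k+1-1-j) * m (k - (k+1-1-j)) = B k
  rw [B, P, two_mul]
  nth_rewrite 1 [← h]
  rw [Finset.mul_sum, ← Finset.sum_add_distrib]
  apply Finset.sum_congr rfl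
  intro i hi
  rw [Finset.mem_range] at hi
  have hik : i ≤ k := Nat.lt_succ_iff.mp hi
  have h1 : k + 1 - 1 - i = k - i := by omega
  have h2 : k - (k - i) = i := by omega
  rw [h1, h2]
  have h3 : ((k - i : ℕ) : ℝ) = (k : ℝ) - i := by
    rw [Nat.cast_sub hik]
  rw [h3]; ring

lemma B_step (k : ℕ) : B (k+2) = B k + P k := by
  have key : ∑ i ∈ range (k+1), ((i:ℝ)+2) * m (i+2) * m (k - i)
      = ∑ i ∈ range (k+1), ((i:ℝ)+1) * m i * m (k - i) := by
    apply Finset.sum_congr rfl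
    intro i _
    have h := m_rec i
    push_cast at h
    linear_combination m (k - i) * h
  have expand : B (k+2) = ∑ i ∈ range (k+1), ((i:ℝ)+2) * m (i+2) * m (k - i) := by
    rw [B]
    rw [Finset.sum_range_succ']  -- peel i = 0
    rw [Finset.sum_range_succ']  -- peel i = 1 (now shifted)
    simp [m_one]
    apply Finset.sum_congr rfl
    intro i _
    have h2 : i + 1 + 1 = i + 2 := by omega
    rw [h2]
    push_cast; ring
  rw [expand, key, B, P, ← Finset.sum_add_distrib]
  apply Finset.sum_congr rfl
  intro i _
  ring
lemma P_step (k : ℕ) : P (k+2) = P k := by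
  have h1 := two_B (k+2)
  have h2 := two_B k
  have h3 := B_step k
  have hk : ((k:ℝ)+2) ≠ 0 := by positivity
  have : ((k:ℝ)+2) * P (k+2) = ((k:ℝ)+2) * P k := by
    push_cast at h1
    nlinarith [h1, h2, h3]
  exact mul_left_cancel₀ hk this

-- S_k = m_{k+2}
lemma S_eq (k : ℕ) : ∑ i ∈ range (k+1), m i * (m (k - i) - m (k - i + 2)) = m (k+2) := by
  have hQ : ∑ i ∈ range (k+1), m i * m (k - i + 2) = P (k+2) - m (k+2) := by
    have : P (k+2) = (∑ i ∈ range (k+1), m i * m (k + 2 - i)) + m (k+1) * m 1 + m (k+2) * m 0 := by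
      rw [P, Finset.sum_range_succ, Finset.sum_range_succ]
      simp
    rw [this, m_one, m_zero]
    have : ∑ i ∈ range (k+1), m i * m (k + 2 - i) = ∑ i ∈ range (k+1), m i * m (k - i + 2) := by
      apply Finset.sum_congr rfl
      intro i hi
      rw [Finset.mem_range] at hi
      have : k + 2 - i = k - i + 2 := by omega
      rw [this]
    rw [this]; ring
  have : ∑ i ∈ range (k+1), m i * (m (k - i) - m (k - i + 2))
      = P k - ∑ i ∈ range (k+1), m i * m (k - i + 2) := by
    rw [P, ← Finset.sum_sub_distrib]
    apply Finset.sum_congr rfl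
    intro i _; ring
  rw [this, hQ, P_step]; ring

-- (★★)
lemma starstar (k : ℕ) :
    (m k - m (k+2)) + ∑ i ∈ range k, m i * (m (k - i) - m (k - i + 2)) = m k / 2 := by
  have h := S_eq k
  rw [Finset.sum_range_succ] at h
  have hkk : k - k = 0 := by omega
  rw [hkk, m_zero, m_two] at h
  norm_num at h
  linarith [h]

noncomputable def dd (p : ℝ[X]) (x : ℝ) : ℝ[X] := p /ₘ (X - C x)

lemma dd_spec (p : ℝ[X]) (x : ℝ) : (X - C x) * dd p x = p - C (p.eval x) := by
  have h := p.modByMonic_add_div (X - C x)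
  rw [Polynomial.modByMonic_X_sub_C_eq_C_eval] at h
  rw [dd]
  linear_combination h

lemma dd_unique (p q : ℝ[X]) (x : ℝ) (h : (X - C x) * q = p - C (p.eval x)) :
    dd p x = q := by
  have h2 := dd_spec p x
  have : (X - C x) * dd p x = (X - C x) * q := by rw [h, h2]
  exact mul_left_cancel₀ (Polynomial.X_sub_C_ne_zero x) this

lemma dd_eval (p : ℝ[X]) (x u : ℝ) :
    (u - x) * (dd p x).eval u = p.eval u - p.eval x := by
  have := congrArg (Polynomial.eval u) (dd_spec p x)
  simpa using this

lemma dd_add (p q : ℝ[X]) (x : ℝ) : dd (p + q) x = dd p x + dd q x := by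
  apply dd_unique
  rw [mul_add, dd_spec, dd_spec]
  simp; ring

lemma dd_C_mul (a : ℝ) (p : ℝ[X]) (x : ℝ) : dd (C a * p) x = C a * dd p x := by
  apply dd_unique
  rw [mul_left_comm, dd_spec]
  simp; ring

noncomputable def ddM (n : ℕ) (x : ℝ) : ℝ[X] := ∑ i ∈ range n, X ^ i * C x ^ (n - 1 - i)

lemma dd_X_pow (n : ℕ) (x : ℝ) : dd (X ^ n) x = ddM n x := by
  apply dd_unique
  rw [mul_comm, ddM, geom_sum₂_mul]
  simp

lemma dd_X_mul (g : ℝ[X]) (x : ℝ) : dd (X * g) x = X * dd g x + C (g.eval x) := by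
  apply dd_unique
  have h := dd_spec g x
  simp only [eval_mul, eval_X]
  calc (X - C x) * (X * dd g x + C (g.eval x))
      = X * ((X - C x) * dd g x) + (X - C x) * C (g.eval x) := by ring
    _ = X * (g - C (g.eval x)) + (X - C x) * C (g.eval x) := by rw [h]
    _ = X * g - C (x * g.eval x) := by simp [C_mul]; ring

noncomputable def Fi (q : ℝ[X]) : ℝ := ∫ θ in Ioo (0:ℝ) π, q.eval (Real.cos θ)

lemma integrableOn_eval_cos (q : ℝ[X]) :
    IntegrableOn (fun θ => q.eval (Real.cos θ)) (Ioo (0:ℝ) π) :=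
  ((q.continuous_aeval).comp Real.continuous_cos).integrableOn_Icc.mono_set Ioo_subset_Icc_self

lemma Fi_add (q r : ℝ[X]) : Fi (q + r) = Fi q + Fi r := by
  simp only [Fi, eval_add]
  exact integral_add (integrableOn_eval_cos q) (integrableOn_eval_cos r)

lemma Fi_zero : Fi 0 = 0 := by simp [Fi]

lemma Fi_C_mul (a : ℝ) (q : ℝ[X]) : Fi (C a * q) = a * Fi q := by
  simp only [Fi, eval_mul, eval_C]
  exact integral_const_mul a _

lemma Fi_sub (q r : ℝ[X]) : Fi (q - r) = Fi q - Fi r := by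
  simp only [Fi, eval_sub]
  exact integral_sub (integrableOn_eval_cos q) (integrableOn_eval_cos r)

lemma Fi_sum {ι : Type*} (s : Finset ι) (f : ι → ℝ[X]) :
    Fi (∑ i ∈ s, f i) = ∑ i ∈ s, Fi (f i) := by
  classical
  induction s using Finset.cons_induction with
  | empty => simp [Fi_zero]
  | cons a s ha ih => rw [Finset.sum_cons, Finset.sum_cons, Fi_add, ih]

lemma Fi_X_pow (i : ℕ) : Fi (X ^ i) = Mi i := by simp [Fi, Mi]

lemma Fi_one_sub_sq_mul_ddM (n : ℕ) (x : ℝ) :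
    Fi ((1 - X^2) * ddM n x) = ∑ i ∈ range n, x^(n-1-i) * (Mi i - Mi (i+2)) := by
  rw [ddM, Finset.mul_sum, Fi_sum]
  apply Finset.sum_congr rfl
  intro i _
  have h : (1 - X^2) * (X ^ i * C x ^ (n-1-i)) = C (x^(n-1-i)) * (X^i - X^(i+2)) := by
    rw [C_pow]; ring
  rw [h, Fi_C_mul, Fi_sub, Fi_X_pow, Fi_X_pow]

lemma Fi_X_sub_cube_mul_ddM (j : ℕ) (x : ℝ) :
    Fi ((X - X^3) * ddM j x) = ∑ b ∈ range j, x^(j-1-b) * (Mi (b+1) - Mi (b+3)) := by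
  rw [ddM, Finset.mul_sum, Fi_sum]
  apply Finset.sum_congr rfl
  intro b _
  have h : (X - X^3) * (X ^ b * C x ^ (j-1-b)) = C (x^(j-1-b)) * (X^(b+1) - X^(b+3)) := by
    rw [C_pow]; ring
  rw [h, Fi_C_mul, Fi_sub, Fi_X_pow, Fi_X_pow]

lemma Mi_eq_pi_mul (j : ℕ) : Mi j = π * m j := by
  rw [m, mul_div_cancel₀ _ Real.pi_ne_zero]

lemma MiStar (k : ℕ) :
    (Mi k - Mi (k+2)) + π⁻¹ * ∑ i ∈ range k, Mi i * (Mi (k-i) - Mi (k-i+2)) = Mi k / 2 := by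
  have hsum : ∑ i ∈ range k, Mi i * (Mi (k-i) - Mi (k-i+2))
      = π^2 * ∑ i ∈ range k, m i * (m (k-i) - m (k-i+2)) := by
    rw [Finset.mul_sum]
    apply Finset.sum_congr rfl
    intro i _
    rw [Mi_eq_pi_mul, Mi_eq_pi_mul, Mi_eq_pi_mul]
    ring
  rw [hsum, Mi_eq_pi_mul k, Mi_eq_pi_mul (k+2)]
  have h := starstar k
  have hπ := Real.pi_ne_zero
  field_simp
  linear_combination 2 * h

lemma dd_zero (x : ℝ) : dd 0 x = 0 := by
  apply dd_unique; simp

lemma dd_sum {ι : Type*} (s : Finset ι) (f : ι → ℝ[X]) (x : ℝ) :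
    dd (∑ i ∈ s, f i) x = ∑ i ∈ s, dd (f i) x := by
  classical
  induction s using Finset.cons_induction with
  | empty => simp [dd_zero]
  | cons a s ha ih => rw [Finset.sum_cons, Finset.sum_cons, dd_add, ih]

noncomputable def psi (n : ℕ) : ℝ[X] := ∑ i ∈ range n, C (Mi i) * X ^ (n - 1 - i)

noncomputable def gp (p : ℝ[X]) : ℝ[X] := p.sum fun n a => C a * psi n

lemma gp_add (p q : ℝ[X]) : gp (p + q) = gp p + gp q := by
  unfold gp
  apply Polynomial.sum_add_index
  · intro n; simp
  · intro n a b; rw [C_add]; ring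

lemma gp_monomial (n : ℕ) (a : ℝ) : gp (monomial n a) = C a * psi n := by
  unfold gp
  rw [Polynomial.sum_monomial_index]
  simp

lemma Fi_ddM (n : ℕ) (y : ℝ) : Fi (ddM n y) = (psi n).eval y := by
  rw [ddM, Fi_sum, psi, eval_finset_sum]
  apply Finset.sum_congr rfl
  intro i _
  rw [← C_pow, mul_comm, Fi_C_mul, Fi_X_pow]
  simp only [eval_mul, eval_C, eval_pow, eval_X]
  ring

lemma gp_eval (p : ℝ[X]) (y : ℝ) : Fi (dd p y) = (gp p).eval y := by
  conv_lhs => rw [← Polynomial.sum_C_mul_X_pow_eq p]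
  rw [Polynomial.sum_def, dd_sum, Fi_sum, gp, Polynomial.sum_def, eval_finset_sum]
  apply Finset.sum_congr rfl
  intro n _
  rw [dd_C_mul, dd_X_pow, Fi_C_mul, Fi_ddM]
  simp

lemma tri_swap (n : ℕ) (f : ℕ → ℕ → ℝ) :
    ∑ i ∈ range n, ∑ b ∈ range (n-1-i), f i b
      = ∑ k ∈ range n, ∑ i ∈ range k, f i (k-1-i) := by
  rw [Finset.sum_sigma', Finset.sum_sigma']
  apply Finset.sum_nbij' (i := fun q => (⟨q.1 + q.2 + 1, q.1⟩ : Σ _ : ℕ, ℕ))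
    (j := fun q => (⟨q.2, q.1 - 1 - q.2⟩ : Σ _ : ℕ, ℕ))
  · intro a ha
    simp only [Finset.mem_sigma, Finset.mem_range] at ha ⊢
    omega
  · intro a ha
    simp only [Finset.mem_sigma, Finset.mem_range] at ha ⊢
    omega
  · intro a ha
    simp only [Finset.mem_sigma, Finset.mem_range] at ha
    ext <;> simp <;> omega
  · intro a ha
    simp only [Finset.mem_sigma, Finset.mem_range] at ha
    ext <;> simp <;> omega
  · intro a ha
    simp only [Finset.mem_sigma, Finset.mem_range] at ha
    have : a.1 + a.2 + 1 - 1 - a.1 = a.2 := by omega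
    simp [this]

lemma core (n : ℕ) (x : ℝ) :
    Fi ((1 - X^2) * ddM n x) + π⁻¹ * Fi ((X - X^3) * dd (psi n) x) = (psi n).eval x / 2 := by
  have h2 : Fi ((X - X^3) * dd (psi n) x)
      = ∑ i ∈ range n, ∑ b ∈ range (n-1-i),
          Mi i * (x^(n-1-i-1-b) * (Mi (b+1) - Mi (b+3))) := by
    rw [psi, dd_sum, Finset.mul_sum, Fi_sum]
    apply Finset.sum_congr rfl
    intro i _
    rw [dd_C_mul, dd_X_pow]
    have h : (X - X^3) * (C (Mi i) * ddM (n-1-i) x)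
        = C (Mi i) * ((X - X^3) * ddM (n-1-i) x) := by ring
    rw [h, Fi_C_mul, Fi_X_sub_cube_mul_ddM, Finset.mul_sum]
  rw [h2, Fi_one_sub_sq_mul_ddM,
    tri_swap n (fun i b => Mi i * (x^(n-1-i-1-b) * (Mi (b+1) - Mi (b+3)))),
    psi, eval_finset_sum, Finset.mul_sum, Finset.sum_div, ← Finset.sum_add_distrib]
  apply Finset.sum_congr rfl
  intro k hk
  rw [Finset.mem_range] at hk
  have hinner : ∑ i ∈ range k, Mi i * (x^(n-1-i-1-(k-1-i)) * (Mi (k-1-i+1) - Mi (k-1-i+3)))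
      = x^(n-1-k) * ∑ i ∈ range k, Mi i * (Mi (k-i) - Mi (k-i+2)) := by
    rw [Finset.mul_sum]
    apply Finset.sum_congr rfl
    intro i hi
    rw [Finset.mem_range] at hi
    have e1 : n-1-i-1-(k-1-i) = n-1-k := by omega
    have e2 : k-1-i+1 = k-i := by omega
    have e3 : k-1-i+3 = k-i+2 := by omega
    rw [e1, e2, e3]; ring
  rw [hinner]
  simp only [eval_mul, eval_C, eval_pow, eval_X]
  linear_combination x^(n-1-k) * MiStar k

lemma star (p : ℝ[X]) (x : ℝ) :
    Fi ((1 - X^2) * dd p x) + π⁻¹ * Fi ((X - X^3) * dd (gp p) x) = (gp p).eval x / 2 := by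
  induction p using Polynomial.induction_on' with
  | add p q hp hq =>
      rw [dd_add, gp_add, dd_add, mul_add, mul_add, Fi_add, Fi_add, eval_add]
      linear_combination hp + hq
  | monomial n a =>
      have hg : gp (monomial n a) = C a * psi n := gp_monomial n a
      have hd : dd (monomial n a) x = C a * ddM n x := by
        rw [← C_mul_X_pow_eq_monomial, dd_C_mul, dd_X_pow]
      rw [hg, hd, dd_C_mul]
      have r1 : (1-X^2) * (C a * ddM n x) = C a * ((1-X^2) * ddM n x) := by ring
      have r2 : (X-X^3) * (C a * dd (psi n) x) = C a * ((X-X^3) * dd (psi n) x) := by ring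
      rw [r1, r2, Fi_C_mul, Fi_C_mul, eval_mul, eval_C]
      linear_combination a * core n x

lemma cos_image : Real.cos '' Ioo 0 π = Ioo (-1 : ℝ) 1 := by
  apply Set.Subset.antisymm
  · rintro y ⟨θ, hθ, rfl⟩
    constructor
    · have := Real.strictAntiOn_cos (by constructor <;> [exact le_of_lt hθ.1; exact hθ.2.le])
        (right_mem_Icc.mpr Real.pi_pos.le) hθ.2
      simpa [Real.cos_pi] using this
    · have := Real.strictAntiOn_cos (left_mem_Icc.mpr Real.pi_pos.le)
        (by constructor <;> [exact le_of_lt hθ.1; exact hθ.2.le]) hθ.1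
      simpa [Real.cos_zero] using this
  · have h := intermediate_value_Ioo' (a := (0:ℝ)) (b := π) Real.pi_pos.le
      Real.continuous_cos.continuousOn
    simpa [Real.cos_zero, Real.cos_pi] using h

lemma cov (g : ℝ → ℝ) :
    ∫ u in Ioo (-1 : ℝ) 1, g u = ∫ θ in Ioo (0:ℝ) π, Real.sin θ * g (Real.cos θ) := by
  rw [← cos_image]
  rw [integral_image_eq_integral_abs_deriv_smul measurableSet_Ioo
    (fun θ _ => (Real.hasDerivAt_cos θ).hasDerivWithinAt)
    (Real.injOn_cos.mono Ioo_subset_Icc_self) g]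
  apply setIntegral_congr_fun measurableSet_Ioo
  intro θ hθ
  have hs : Real.sin θ ≥ 0 := Real.sin_nonneg_of_nonneg_of_le_pi hθ.1.le hθ.2.le
  simp [abs_of_nonneg hs, smul_eq_mul]

lemma restrict_ne_ae (x : ℝ) (s : Set ℝ) :
    ∀ᵐ u ∂(volume.restrict s), u ≠ x := by
  rw [ae_iff]
  apply measure_mono_null (t := {x})
  · intro u hu
    simp only [mem_setOf_eq, not_not] at hu
    simp [hu]
  · exact le_antisymm
      ((Measure.restrict_apply (measurableSet_singleton x)).le.trans
        (le_trans (measure_mono inter_subset_left) (by simp))) zero_le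

lemma A2 (q : ℝ[X]) (x : ℝ) :
    ∫ u in Ioo (-1 : ℝ) 1, (q.eval u - q.eval x) / ((u - x) * Real.sqrt (1 - u^2))
      = Fi (dd q x) := by
  have hae : (fun u => (q.eval u - q.eval x) / ((u - x) * Real.sqrt (1 - u^2)))
      =ᵐ[volume.restrict (Ioo (-1 : ℝ) 1)]
      (fun u => (dd q x).eval u / Real.sqrt (1 - u^2)) := by
    filter_upwards [restrict_ne_ae x _] with u hu
    rw [← dd_eval q x u, mul_div_mul_left _ _ (sub_ne_zero.mpr hu)]
  rw [integral_congr_ae hae, cov (fun u => (dd q x).eval u / Real.sqrt (1 - u^2))]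
  apply setIntegral_congr_fun measurableSet_Ioo
  intro θ hθ
  have hspos : 0 < Real.sin θ := Real.sin_pos_of_pos_of_lt_pi hθ.1 hθ.2
  have hs : Real.sqrt (1 - Real.cos θ ^ 2) = Real.sin θ := by
    rw [← Real.sin_sq, Real.sqrt_sq hspos.le]
  simp only [hs]
  field_simp

lemma A3 (q : ℝ[X]) (x : ℝ) :
    ∫ u in Ioo (-1 : ℝ) 1, (q.eval u - q.eval x) * Real.sqrt (1 - u^2) / (u - x)
      = Fi ((1 - X^2) * dd q x) := by
  have hae : (fun u => (q.eval u - q.eval x) * Real.sqrt (1 - u^2) / (u - x))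
      =ᵐ[volume.restrict (Ioo (-1 : ℝ) 1)]
      (fun u => (dd q x).eval u * Real.sqrt (1 - u^2)) := by
    filter_upwards [restrict_ne_ae x _] with u hu
    rw [← dd_eval q x u, mul_assoc, mul_div_cancel_left₀ _ (sub_ne_zero.mpr hu)]
  rw [integral_congr_ae hae, cov (fun u => (dd q x).eval u * Real.sqrt (1 - u^2))]
  apply setIntegral_congr_fun measurableSet_Ioo
  intro θ hθ
  have hspos : 0 < Real.sin θ := Real.sin_pos_of_pos_of_lt_pi hθ.1 hθ.2
  have hs : Real.sqrt (1 - Real.cos θ ^ 2) = Real.sin θ := by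
    rw [← Real.sin_sq, Real.sqrt_sq hspos.le]
  simp only [hs, eval_mul, eval_sub, eval_one, eval_pow, eval_X]
  rw [← Real.sin_sq]
  ring

lemma Fi_one_sub_sq : Fi (1 - X^2) = π / 2 := by
  have h1 : Fi 1 = π := by
    have := Fi_X_pow 0
    simpa [Mi_zero] using this
  have h2 : Fi (X^2) = π / 2 := by
    rw [Fi_X_pow]
    have := Mi_rec 0
    rw [Mi_zero] at this
    rw [this]; push_cast; ring
  rw [Fi_sub, h1, h2]; ring


/-- With `T`, `T₂` the secondary operators for the Chebyshev
weights of second and first kind, and `V(h) = h − (x/2)T(h)`,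
`W(g) = g + x·T₂(g)`, one has `V(W(f)) = f` for every polynomial `f` of mean
zero against the second-kind weight. -/
theorem stmt_14 (p : Polynomial ℝ)
    (h0 : ∫ x in Ioo (-1 : ℝ) 1,
      p.eval x * (2 / Real.pi * Real.sqrt (1 - x ^ 2)) = 0)
    (W : ℝ → ℝ)
    (hW : ∀ x, W x = p.eval x + x * ((1 / Real.pi) *
      ∫ u in Ioo (-1 : ℝ) 1,
        (p.eval u - p.eval x) / ((u - x) * Real.sqrt (1 - u ^ 2)))) :
    ∀ x ∈ Ioo (-1 : ℝ) 1,
      W x - (x / 2) * ((2 / Real.pi) *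
          ∫ u in Ioo (-1 : ℝ) 1, (W u - W x) * Real.sqrt (1 - u ^ 2) / (u - x))
        = p.eval x := by
  intro x _
  set Wp : ℝ[X] := p + C π⁻¹ * (X * gp p) with hWp
  have hWu : ∀ u : ℝ, W u = Wp.eval u := by
    intro u
    have hA2 : ∫ v in Ioo (-1 : ℝ) 1,
        (p.eval v - p.eval u) / ((v - u) * Real.sqrt (1 - v ^ 2)) = Fi (dd p u) := by
      have := A2 p u
      simpa [sq] using this
    rw [hW u, hA2, gp_eval]
    simp only [hWp, eval_add, eval_mul, eval_C, eval_X]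
    rw [one_div]
    ring
  have houter : ∫ u in Ioo (-1 : ℝ) 1, (W u - W x) * Real.sqrt (1 - u ^ 2) / (u - x)
      = Fi ((1 - X^2) * dd Wp x) := by
    have := A3 Wp x
    simp only [hWu]
    simpa [sq] using this
  have hdd : dd Wp x = dd p x + C π⁻¹ * (X * dd (gp p) x + C ((gp p).eval x)) := by
    rw [hWp, dd_add, dd_C_mul, dd_X_mul]
  have hexp : (1 - X^2) * dd Wp x
      = (1 - X^2) * dd p x
        + C π⁻¹ * ((X - X^3) * dd (gp p) x + C ((gp p).eval x) * (1 - X^2)) := by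
    rw [hdd]; ring
  have hFi : Fi ((1 - X^2) * dd Wp x) = (gp p).eval x := by
    rw [hexp, Fi_add, Fi_C_mul, Fi_add, Fi_C_mul, Fi_one_sub_sq]
    have hstar := star p x
    have hinv : π⁻¹ * π = 1 := inv_mul_cancel₀ Real.pi_ne_zero
    linear_combination hstar + (eval x (gp p) / 2) * hinv
  rw [houter, hFi, hWu x]
  simp only [hWp, eval_add, eval_mul, eval_C, eval_X]
  ring
end

section
/- Let ρ be a probability density on compact I with first moment c₁. For the family of equi-normal densities ρ_t (secondary measure t·μ, first moment c₁) and s,t > 0, the iterated construction satisfies (ρ_t)_s = ρ_{t·s}: the density obtained from ρ_t by the parameter s equals the density obtained from ρ by the parameter t·s. -/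
open MeasureTheory Set Filter

namespace Stmt15Aux


/-- integral = 1 forces integrability -/
lemma integrableOn_of_integral_eq_one {a b : ℝ} {f : ℝ → ℝ}
    (h : ∫ x in Icc a b, f x = 1) : IntegrableOn f (Icc a b) := by
  by_contra hc
  rw [integral_undef hc] at h
  norm_num at h

/-- multiply by bounded-on-Icc measurable function preserves integrability -/
lemma integrableOn_bddmul {a b : ℝ} {f g : ℝ → ℝ} (hf : IntegrableOn f (Icc a b))
    (hg : AEStronglyMeasurable g (volume.restrict (Icc a b)))
    {C : ℝ} (hC : ∀ u ∈ Icc a b, ‖g u‖ ≤ C) :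
    IntegrableOn (fun u => g u * f u) (Icc a b) := by
  exact Integrable.bdd_mul (c := C) hf hg
    ((ae_restrict_iff' measurableSet_Icc).mpr (ae_of_all _ hC))

lemma integrableOn_pow_mul {a b : ℝ} {f : ℝ → ℝ} (hf : IntegrableOn f (Icc a b)) (n : ℕ) :
    IntegrableOn (fun u => u ^ n * f u) (Icc a b) := by
  refine integrableOn_bddmul hf ((measurable_id.pow_const n).aestronglyMeasurable)
    (C := (max |a| |b|) ^ n) ?_
  intro u hu
  have h1 : |u| ≤ max |a| |b| := abs_le.mpr ⟨le_trans (neg_le_neg (le_max_left _ _))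
      (le_trans (neg_abs_le a) hu.1), le_trans hu.2 (le_trans (le_abs_self b) (le_max_right _ _))⟩
  calc ‖u ^ n‖ = |u| ^ n := by rw [Real.norm_eq_abs, abs_pow]
    _ ≤ (max |a| |b|) ^ n := pow_le_pow_left₀ (abs_nonneg u) h1 n

lemma integrableOn_div_sub {a b x : ℝ} {f : ℝ → ℝ} (hf : IntegrableOn f (Icc a b))
    (hx : b < x) : IntegrableOn (fun u => f u / (x - u)) (Icc a b) := by
  have : IntegrableOn (fun u => (x - u)⁻¹ * f u) (Icc a b) := by
    refine integrableOn_bddmul hf ((measurable_const.sub measurable_id).inv.aestronglyMeasurable)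
      (C := (x - b)⁻¹) ?_
    intro u hu
    have h1 : 0 < x - b := by linarith
    have h2 : x - b ≤ x - u := by linarith [hu.2]
    rw [Real.norm_eq_abs, abs_inv, abs_of_pos (lt_of_lt_of_le h1 h2)]
    exact inv_anti₀ h1 h2
  exact this.congr_fun (fun u _ => by rw [div_eq_inv_mul]) measurableSet_Icc





lemma moment_step {a b : ℝ} {f : ℝ → ℝ} (hf : IntegrableOn f (Icc a b)) (n : ℕ)
    (hn : ∀ x : ℝ, b < x → ∫ u in Icc a b, u ^ n * f u / (x - u) = 0) :
    (∫ u in Icc a b, u ^ n * f u) = 0 ∧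
      ∀ x : ℝ, b < x → ∫ u in Icc a b, u ^ (n + 1) * f u / (x - u) = 0 := by
  have hint1 := integrableOn_pow_mul hf n
  have hint2 := integrableOn_pow_mul hf (n + 1)
  have hdiv : ∀ x : ℝ, b < x →
      IntegrableOn (fun u => u ^ (n + 1) * f u / (x - u)) (Icc a b) :=
    fun x hx => integrableOn_div_sub hint2 hx
  set m := ∫ u in Icc a b, u ^ n * f u with hm_def
  set C := ∫ u in Icc a b, ‖u ^ (n + 1) * f u‖ with hC_def
  have hC : 0 ≤ C := integral_nonneg fun u => norm_nonneg _
  have key : ∀ x : ℝ, b < x →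
      (∫ u in Icc a b, u ^ (n + 1) * f u / (x - u)) = -m := by
    intro x hx
    have e1 : (∫ u in Icc a b, (u ^ n * f u + u ^ (n + 1) * f u / (x - u)))
        = m + ∫ u in Icc a b, u ^ (n + 1) * f u / (x - u) :=
      integral_add hint1 (hdiv x hx)
    have e2 : (∫ u in Icc a b, (u ^ n * f u + u ^ (n + 1) * f u / (x - u)))
        = ∫ u in Icc a b, x * (u ^ n * f u / (x - u)) := by
      refine setIntegral_congr_fun measurableSet_Icc (fun u hu => ?_)
      have hxu : x - u ≠ 0 := by have := hu.2; intro hc; nlinarith [hu.2]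
      field_simp
      ring
    have e3 : (∫ u in Icc a b, x * (u ^ n * f u / (x - u)))
        = x * ∫ u in Icc a b, u ^ n * f u / (x - u) := integral_const_mul x _
    rw [e2, e3, hn x hx, mul_zero] at e1
    linarith [e1]
  have bound : ∀ x : ℝ, b < x → |m| ≤ C / (x - b) := by
    intro x hx
    have hxb : 0 < x - b := by linarith
    have h1 : ‖∫ u in Icc a b, u ^ (n + 1) * f u / (x - u)‖
        ≤ ∫ u in Icc a b, ‖u ^ (n + 1) * f u / (x - u)‖ := norm_integral_le_integral_norm _
    have h2 : (∫ u in Icc a b, ‖u ^ (n + 1) * f u / (x - u)‖)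
        ≤ ∫ u in Icc a b, ‖u ^ (n + 1) * f u‖ / (x - b) := by
      refine setIntegral_mono_on (hdiv x hx).norm (hint2.norm.div_const _)
        measurableSet_Icc (fun u hu => ?_)
      have hxu : 0 < x - u := by linarith [hu.2]
      rw [Real.norm_eq_abs, abs_div, abs_of_pos hxu]
      exact div_le_div_of_nonneg_left (abs_nonneg _) hxb (by linarith [hu.2])
    have h3 : (∫ u in Icc a b, ‖u ^ (n + 1) * f u‖ / (x - b)) = C / (x - b) :=
      integral_div _ _
    rw [key x hx] at h1
    rw [Real.norm_eq_abs, abs_neg] at h1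
    linarith
  have hm : m = 0 := by
    by_contra h0
    have hε : 0 < |m| := abs_pos.mpr h0
    have hq : 0 < (C + 1) / |m| := div_pos (by linarith) hε
    have hx : b < b + (C + 1) / |m| := by linarith
    have hb := bound _ hx
    have hxb : b + (C + 1) / |m| - b = (C + 1) / |m| := by ring
    rw [hxb, div_div_eq_mul_div] at hb
    rw [le_div_iff₀ (by linarith)] at hb
    nlinarith
  refine ⟨hm, fun x hx => ?_⟩
  rw [key x hx, hm, neg_zero]

lemma moments_zero {a b : ℝ} {f : ℝ → ℝ} (hf : IntegrableOn f (Icc a b))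
    (h : ∀ x : ℝ, b < x → ∫ u in Icc a b, f u / (x - u) = 0) :
    ∀ n : ℕ, ∫ u in Icc a b, u ^ n * f u = 0 := by
  have main : ∀ n : ℕ, ∀ x : ℝ, b < x →
      ∫ u in Icc a b, u ^ n * f u / (x - u) = 0 := by
    intro n
    induction n with
    | zero => intro x hx; simpa using h x hx
    | succ n ih => exact (moment_step hf n ih).2
  exact fun n => (moment_step hf n (main n)).1




lemma integrableOn_contmul {a b : ℝ} {f g : ℝ → ℝ} (hf : IntegrableOn f (Icc a b))
    (hg : ContinuousOn g (Icc a b)) :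
    IntegrableOn (fun u => g u * f u) (Icc a b) := by
  obtain ⟨C, hC⟩ := isCompact_Icc.exists_bound_of_continuousOn hg
  exact integrableOn_bddmul hf (hg.aestronglyMeasurable measurableSet_Icc) hC

lemma poly_integral_zero {a b : ℝ} {f : ℝ → ℝ} (hf : IntegrableOn f (Icc a b))
    (hmom : ∀ n : ℕ, ∫ u in Icc a b, u ^ n * f u = 0) (p : Polynomial ℝ) :
    ∫ u in Icc a b, p.eval u * f u = 0 := by
  induction p using Polynomial.induction_on' with
  | add p q hp hq =>
    have e : ∫ u in Icc a b, (p + q).eval u * f u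
        = ∫ u in Icc a b, (p.eval u * f u + q.eval u * f u) := by
      refine setIntegral_congr_fun measurableSet_Icc (fun u _ => ?_)
      simp [Polynomial.eval_add, add_mul]
    rw [e, integral_add (integrableOn_contmul hf p.continuous.continuousOn)
      (integrableOn_contmul hf q.continuous.continuousOn), hp, hq, add_zero]
  | monomial n c =>
    have e : ∫ u in Icc a b, (Polynomial.monomial n c).eval u * f u
        = ∫ u in Icc a b, c * (u ^ n * f u) := by
      refine setIntegral_congr_fun measurableSet_Icc (fun u _ => ?_)
      simp [Polynomial.eval_monomial, mul_assoc]
    rw [e, integral_const_mul, hmom n, mul_zero]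

lemma cont_integral_zero {a b : ℝ} {f : ℝ → ℝ} (hf : IntegrableOn f (Icc a b))
    (hmom : ∀ n : ℕ, ∫ u in Icc a b, u ^ n * f u = 0)
    {g : ℝ → ℝ} (hg : ContinuousOn g (Icc a b)) :
    ∫ u in Icc a b, g u * f u = 0 := by
  set I := ∫ u in Icc a b, g u * f u with hI
  have key : ∀ ε : ℝ, 0 < ε → |I| ≤ ε := by
    intro ε hε
    set N := ∫ u in Icc a b, ‖f u‖ with hN
    have hN0 : 0 ≤ N := integral_nonneg fun u => norm_nonneg _
    have hδ : 0 < ε / (N + 1) := div_pos hε (by linarith)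
    obtain ⟨p, hp⟩ := exists_polynomial_near_of_continuousOn a b g hg _ hδ
    have hpint := integrableOn_contmul hf (p.continuous.continuousOn (s := Icc a b))
    have hgint := integrableOn_contmul hf hg
    have e : I = ∫ u in Icc a b, (g u - p.eval u) * f u := by
      have := integral_sub hgint hpint
      rw [poly_integral_zero hf hmom p] at this
      rw [hI]
      rw [← sub_zero (∫ u in Icc a b, g u * f u)]
      rw [← this]
      refine setIntegral_congr_fun measurableSet_Icc (fun u _ => ?_)
      ring
    have h1 : |I| ≤ ∫ u in Icc a b, ‖(g u - p.eval u) * f u‖ := by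
      rw [e, ← Real.norm_eq_abs]
      exact norm_integral_le_integral_norm (fun u => (g u - p.eval u) * f u)
    have h2 : (∫ u in Icc a b, ‖(g u - p.eval u) * f u‖)
        ≤ ∫ u in Icc a b, (ε / (N + 1)) * ‖f u‖ := by
      refine setIntegral_mono_on ?_ (hf.norm.const_mul _) measurableSet_Icc
        (fun u hu => ?_)
      · refine (integrableOn_contmul hf ?_).norm
        exact hg.sub p.continuous.continuousOn
      · rw [norm_mul]
        refine mul_le_mul_of_nonneg_right ?_ (norm_nonneg _)
        rw [Real.norm_eq_abs, abs_sub_comm]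
        exact (hp u hu).le
    have h3 : (∫ u in Icc a b, (ε / (N + 1)) * ‖f u‖) = (ε / (N + 1)) * N :=
      integral_const_mul _ _
    have h4 : (ε / (N + 1)) * N ≤ ε := by
      rw [div_mul_eq_mul_div, div_le_iff₀ (by linarith)]
      nlinarith
    linarith
  by_contra h0
  have := key (|I| / 2) (by positivity)
  linarith [abs_pos.mpr h0, this]


lemma indicator_integral_zero {a b x : ℝ} {f : ℝ → ℝ} (hf : IntegrableOn f (Icc a b))
    (hcont : ∀ g : ℝ → ℝ, ContinuousOn g (Icc a b) → ∫ u in Icc a b, g u * f u = 0) :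
    ∫ u in Icc a b, (Iic x).indicator f u = 0 := by
  set gseq : ℕ → ℝ → ℝ := fun n u => max 0 (min 1 (((n : ℝ) + 1) * (x - u) + 1)) with hgseq
  have hgc : ∀ n, Continuous (gseq n) := by
    intro n
    exact continuous_const.max (continuous_const.min (by fun_prop))
  have htend : Tendsto (fun n => ∫ u in Icc a b, gseq n u * f u) atTop
      (nhds (∫ u in Icc a b, (Iic x).indicator f u)) := by
    refine tendsto_integral_of_dominated_convergence (fun u => ‖f u‖)
      (fun n => ((hgc n).aestronglyMeasurable).mul hf.1) hf.norm (fun n => ?_) ?_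
    · refine ae_of_all _ fun u => ?_
      rw [norm_mul]
      refine mul_le_of_le_one_left (norm_nonneg _) ?_
      rw [Real.norm_eq_abs, abs_of_nonneg (le_max_left _ _)]
      exact max_le zero_le_one (min_le_left _ _)
    · refine ae_of_all _ fun u => ?_
      rcases le_or_gt u x with hux | hux
      · have hval : ∀ n : ℕ, gseq n u = 1 := by
          intro n
          have h1 : (1 : ℝ) ≤ ((n : ℝ) + 1) * (x - u) + 1 := by nlinarith [Nat.cast_nonneg (α := ℝ) n]
          rw [hgseq]
          simp only [min_eq_left h1, max_eq_right zero_le_one]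
        have : (fun n => gseq n u * f u) = fun _ => f u := by
          funext n; rw [hval n, one_mul]
        rw [this, indicator_of_mem (mem_Iic.mpr hux)]
        exact tendsto_const_nhds
      · have hval : ∀ᶠ n : ℕ in atTop, gseq n u * f u = 0 := by
          rw [eventually_atTop]
          refine ⟨⌈1 / (u - x)⌉₊, fun n hn => ?_⟩
          have hux' : 0 < u - x := by linarith
          have h1 : 1 / (u - x) ≤ (n : ℝ) + 1 := by
            calc 1 / (u - x) ≤ (⌈1 / (u - x)⌉₊ : ℝ) := Nat.le_ceil _
              _ ≤ (n : ℝ) := by exact_mod_cast hn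
              _ ≤ (n : ℝ) + 1 := by linarith
          have h2 : 1 ≤ ((n : ℝ) + 1) * (u - x) := by
            have := (div_le_iff₀ hux').mp h1
            linarith
          have h3 : ((n : ℝ) + 1) * (x - u) + 1 ≤ 0 := by nlinarith
          rw [hgseq]
          simp only [min_eq_right (le_trans h3 zero_le_one), max_eq_left h3, zero_mul]
        rw [indicator_of_notMem (by simpa using hux)]
        exact Tendsto.congr' (hval.mono fun n h => h.symm) tendsto_const_nhds
  have hzero : ∀ n, ∫ u in Icc a b, gseq n u * f u = 0 :=
    fun n => hcont (gseq n) (hgc n).continuousOn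
  have : Tendsto (fun _ : ℕ => (0 : ℝ)) atTop
      (nhds (∫ u in Icc a b, (Iic x).indicator f u)) := by
    refine htend.congr fun n => (hzero n)
  exact tendsto_nhds_unique this tendsto_const_nhds

lemma ae_eq_of_indicator_integrals {a b : ℝ} {f1 f2 : ℝ → ℝ}
    (h1 : IntegrableOn f1 (Icc a b)) (h2 : IntegrableOn f2 (Icc a b))
    (hp1 : ∀ u ∈ Icc a b, 0 ≤ f1 u) (hp2 : ∀ u ∈ Icc a b, 0 ≤ f2 u)
    (hIic : ∀ x : ℝ, ∫ u in Icc a b, (Iic x).indicator f1 u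
      = ∫ u in Icc a b, (Iic x).indicator f2 u) :
    ∀ᵐ u ∂(volume.restrict (Icc a b)), f1 u = f2 u := by
  set μ := volume.restrict (Icc a b) with hμ
  have hae1 : 0 ≤ᵐ[μ] f1 := (ae_restrict_iff' measurableSet_Icc).mpr (ae_of_all _ hp1)
  have hae2 : 0 ≤ᵐ[μ] f2 := (ae_restrict_iff' measurableSet_Icc).mpr (ae_of_all _ hp2)
  have hm1 : AEMeasurable (fun u => ENNReal.ofReal (f1 u)) μ :=
    ENNReal.measurable_ofReal.comp_aemeasurable h1.aemeasurable
  have hm2 : AEMeasurable (fun u => ENNReal.ofReal (f2 u)) μ :=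
    ENNReal.measurable_ofReal.comp_aemeasurable h2.aemeasurable
  set ν₁ := μ.withDensity (fun u => ENNReal.ofReal (f1 u)) with hν₁
  set ν₂ := μ.withDensity (fun u => ENNReal.ofReal (f2 u)) with hν₂
  have hfin1 : IsFiniteMeasure ν₁ := by
    refine isFiniteMeasure_withDensity ?_
    rw [← ofReal_integral_eq_lintegral_ofReal h1 hae1]
    exact ENNReal.ofReal_ne_top
  have hfin2 : IsFiniteMeasure ν₂ := by
    refine isFiniteMeasure_withDensity ?_
    rw [← ofReal_integral_eq_lintegral_ofReal h2 hae2]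
    exact ENNReal.ofReal_ne_top
  have happ : ∀ (f : ℝ → ℝ), IntegrableOn f (Icc a b) → (∀ u ∈ Icc a b, 0 ≤ f u) →
      ∀ x : ℝ, (μ.withDensity (fun u => ENNReal.ofReal (f u))) (Iic x)
        = ENNReal.ofReal (∫ u in Icc a b, (Iic x).indicator f u) := by
    intro f hf hpf x
    rw [withDensity_apply _ measurableSet_Iic]
    rw [hμ, Measure.restrict_restrict measurableSet_Iic]
    have hint : IntegrableOn f (Iic x ∩ Icc a b) :=
      hf.mono_set inter_subset_right
    have haef : 0 ≤ᵐ[volume.restrict (Iic x ∩ Icc a b)] f :=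
      (ae_restrict_iff' (measurableSet_Iic.inter measurableSet_Icc)).mpr
        (ae_of_all _ fun u hu => hpf u hu.2)
    rw [← ofReal_integral_eq_lintegral_ofReal hint haef]
    congr 1
    rw [integral_indicator measurableSet_Iic,
      Measure.restrict_restrict measurableSet_Iic]
  have hext : ν₁ = ν₂ := by
    refine Measure.ext_of_Iic ν₁ ν₂ (fun x => ?_)
    rw [hν₁, hν₂, happ f1 h1 hp1 x, happ f2 h2 hp2 x, hIic x]
  have heq : (fun u => ENNReal.ofReal (f1 u)) =ᵐ[μ]
      (fun u => ENNReal.ofReal (f2 u)) :=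
    (withDensity_eq_iff_of_sigmaFinite hm1 hm2).mp hext
  filter_upwards [heq, hae1, hae2] with u hu h1u h2u
  rwa [ENNReal.ofReal_eq_ofReal_iff h1u h2u] at hu

end Stmt15Aux

open MeasureTheory Set

/-- The iterated equi-normal construction satisfies
`(ρ_t)_s = ρ_{t·s}` (as densities, a.e. on `I`). -/
theorem stmt_15 (a b : ℝ) (hab : a < b) (ρ ρt σ ρts : ℝ → ℝ) (t s c₁ : ℝ)
    (ht : 0 < t) (hs : 0 < s)
    (hρ : ∀ x ∈ Icc a b, 0 ≤ ρ x) (hρ1 : ∫ x in Icc a b, ρ x = 1)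
    (hρt : ∀ x ∈ Icc a b, 0 ≤ ρt x) (hρt1 : ∫ x in Icc a b, ρt x = 1)
    (hσ : ∀ x ∈ Icc a b, 0 ≤ σ x) (hσ1 : ∫ x in Icc a b, σ x = 1)
    (hρts : ∀ x ∈ Icc a b, 0 ≤ ρts x) (hρts1 : ∫ x in Icc a b, ρts x = 1)
    (hc₁ : c₁ = ∫ x in Icc a b, x * ρ x)
    (hc₁t : c₁ = ∫ x in Icc a b, x * ρt x)
    (hc₁σ : c₁ = ∫ x in Icc a b, x * σ x)
    (hc₁ts : c₁ = ∫ x in Icc a b, x * ρts x)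
    -- ρ_t equi-normal with ρ, parameter t
    (hrel_t : ∀ z ∉ (fun x : ℝ => (x : ℂ)) '' Icc a b,
      (∫ u in Icc a b, (ρt u : ℂ) / (z - (u : ℂ))) *
          ((t : ℂ) + (1 - (t : ℂ)) * (z - (c₁ : ℂ)) *
            ∫ u in Icc a b, (ρ u : ℂ) / (z - (u : ℂ)))
        = ∫ u in Icc a b, (ρ u : ℂ) / (z - (u : ℂ)))
    -- σ = (ρ_t)_s : equi-normal with ρ_t, parameter s
    (hrel_s : ∀ z ∉ (fun x : ℝ => (x : ℂ)) '' Icc a b,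
      (∫ u in Icc a b, (σ u : ℂ) / (z - (u : ℂ))) *
          ((s : ℂ) + (1 - (s : ℂ)) * (z - (c₁ : ℂ)) *
            ∫ u in Icc a b, (ρt u : ℂ) / (z - (u : ℂ)))
        = ∫ u in Icc a b, (ρt u : ℂ) / (z - (u : ℂ)))
    -- ρ_{t·s} equi-normal with ρ, parameter t·s
    (hrel_ts : ∀ z ∉ (fun x : ℝ => (x : ℂ)) '' Icc a b,
      (∫ u in Icc a b, (ρts u : ℂ) / (z - (u : ℂ))) *
          (((t * s : ℝ) : ℂ) + (1 - ((t * s : ℝ) : ℂ)) * (z - (c₁ : ℂ)) *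
            ∫ u in Icc a b, (ρ u : ℂ) / (z - (u : ℂ)))
        = ∫ u in Icc a b, (ρ u : ℂ) / (z - (u : ℂ))) :
    ∀ᵐ x ∂(volume.restrict (Icc a b)), σ x = ρts x := by
  have hρint := Stmt15Aux.integrableOn_of_integral_eq_one hρ1
  have hρtint := Stmt15Aux.integrableOn_of_integral_eq_one hρt1
  have hσint := Stmt15Aux.integrableOn_of_integral_eq_one hσ1
  have hρtsint := Stmt15Aux.integrableOn_of_integral_eq_one hρts1
  have hnm : ∀ x : ℝ, b < x → (x : ℂ) ∉ (fun x : ℝ => (x : ℂ)) '' Icc a b := by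
    intro x hx hmem
    obtain ⟨u, hu, hequ⟩ := hmem
    have hequ' : (u : ℂ) = (x : ℂ) := hequ
    have : u = x := by exact_mod_cast hequ'
    subst this
    linarith [hu.2]
  have hcast : ∀ (f : ℝ → ℝ) (x : ℝ),
      (∫ u in Icc a b, (f u : ℂ) / ((x : ℂ) - (u : ℂ)))
        = ((∫ u in Icc a b, f u / (x - u) : ℝ) : ℂ) := by
    intro f x
    have hcg : (∫ u in Icc a b, (f u : ℂ) / ((x : ℂ) - (u : ℂ)))
        = ∫ u in Icc a b, ((f u / (x - u) : ℝ) : ℂ) := by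
      refine integral_congr_ae (Filter.Eventually.of_forall fun u => ?_)
      push_cast
      ring
    rw [hcg]
    exact integral_ofReal
  have htrans : ∀ x : ℝ, b < x →
      (∫ u in Icc a b, σ u / (x - u)) = ∫ u in Icc a b, ρts u / (x - u) := by
    intro x hx
    have hax : a < x := lt_trans hab hx
    have hG : 0 < ∫ u in Icc a b, ρ u / (x - u) := by
      have hle : (∫ u in Icc a b, ρ u / (x - a)) ≤ ∫ u in Icc a b, ρ u / (x - u) := by
        refine setIntegral_mono_on (hρint.div_const _)
          (Stmt15Aux.integrableOn_div_sub hρint hx) measurableSet_Icc (fun u hu => ?_)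
        exact div_le_div_of_nonneg_left (hρ u hu) (by linarith [hu.2]) (by linarith [hu.1])
      have heq : (∫ u in Icc a b, ρ u / (x - a)) = 1 / (x - a) := by
        rw [integral_div, hρ1]
      have h0 : (0 : ℝ) < 1 / (x - a) := by
        apply one_div_pos.mpr; linarith
      linarith
    set G := ∫ u in Icc a b, ρ u / (x - u) with hG_def
    set Gt := ∫ u in Icc a b, ρt u / (x - u) with hGt_def
    set Gσ := ∫ u in Icc a b, σ u / (x - u) with hGσ_def
    set Gts := ∫ u in Icc a b, ρts u / (x - u) with hGts_def
    have e1 : Gt * (t + (1 - t) * (x - c₁) * G) = G := by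
      have hc := hrel_t (x : ℂ) (hnm x hx)
      rw [hcast ρ x, hcast ρt x] at hc
      exact_mod_cast hc
    have e2 : Gσ * (s + (1 - s) * (x - c₁) * Gt) = Gt := by
      have hc := hrel_s (x : ℂ) (hnm x hx)
      rw [hcast ρt x, hcast σ x] at hc
      exact_mod_cast hc
    have e3 : Gts * (t * s + (1 - t * s) * (x - c₁) * G) = G := by
      have hc := hrel_ts (x : ℂ) (hnm x hx)
      rw [hcast ρ x, hcast ρts x] at hc
      exact_mod_cast hc
    have hGne : G ≠ 0 := ne_of_gt hG
    have hD3 : t * s + (1 - t * s) * (x - c₁) * G ≠ 0 := by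
      intro h
      rw [h, mul_zero] at e3
      exact hGne e3.symm
    have key : Gσ * (t * s + (1 - t * s) * (x - c₁) * G) = G := by
      linear_combination (1 - (1 - s) * (x - c₁) * Gσ) * e1
        + (t + (1 - t) * (x - c₁) * G) * e2
    exact mul_right_cancel₀ hD3 (key.trans e3.symm)
  set f : ℝ → ℝ := fun u => σ u - ρts u with hf_def
  have hfint : IntegrableOn f (Icc a b) := hσint.sub hρtsint
  have hzero : ∀ x : ℝ, b < x → ∫ u in Icc a b, f u / (x - u) = 0 := by
    intro x hx
    have hsplit : (∫ u in Icc a b, f u / (x - u))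
        = (∫ u in Icc a b, σ u / (x - u)) - ∫ u in Icc a b, ρts u / (x - u) := by
      rw [← integral_sub (Stmt15Aux.integrableOn_div_sub hσint hx)
        (Stmt15Aux.integrableOn_div_sub hρtsint hx)]
      refine setIntegral_congr_fun measurableSet_Icc fun u _ => ?_
      simp [hf_def, sub_div]
    rw [hsplit, htrans x hx, sub_self]
  have hmom := Stmt15Aux.moments_zero hfint hzero
  have hcont : ∀ g : ℝ → ℝ, ContinuousOn g (Icc a b) →
      ∫ u in Icc a b, g u * f u = 0 :=
    fun g hg => Stmt15Aux.cont_integral_zero hfint hmom hg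
  have hIic : ∀ x : ℝ, ∫ u in Icc a b, (Iic x).indicator σ u
      = ∫ u in Icc a b, (Iic x).indicator ρts u := by
    intro x
    have h0 := Stmt15Aux.indicator_integral_zero (x := x) hfint hcont
    have hsplit : (∫ u in Icc a b, (Iic x).indicator f u)
        = (∫ u in Icc a b, (Iic x).indicator σ u)
          - ∫ u in Icc a b, (Iic x).indicator ρts u := by
      rw [← integral_sub (hσint.indicator measurableSet_Iic)
        (hρtsint.indicator measurableSet_Iic)]
      refine setIntegral_congr_fun measurableSet_Icc fun u _ => ?_
      by_cases h : u ∈ Iic x <;> simp [indicator, h, hf_def]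
    rw [hsplit] at h0
    linarith
  exact Stmt15Aux.ae_eq_of_indicator_integrals hσint hρtsint hσ hρts hIic
end

section
/- Define V_ρ^t(f)(x) = t·f(x) + (1−t)(x−c₁)T_ρ(f)(x). Then for s,t > 0 the composition formula V_ρ^{t·s} = V_{ρ_t}^s ∘ V_ρ^t holds on the hyperplane H_ρ (equivalently, on the span of the orthonormal polynomials P_n, n ≥ 1). -/
open MeasureTheory Set

open Filter Polynomial

noncomputable def ddPoly (M : ℕ → ℝ) (f : Polynomial ℝ) : Polynomial ℝ :=
  ∑ n ∈ Finset.range (f.natDegree + 1), Polynomial.C (f.coeff n) *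
    ∑ i ∈ Finset.range n, Polynomial.C (M i) * Polynomial.X ^ (n - 1 - i)

lemma int_mul {a b : ℝ} {w φ : ℝ → ℝ} (hw : Integrable w (volume.restrict (Icc a b)))
    (hφ : Measurable φ) {C : ℝ} (hC : ∀ u ∈ Icc a b, |φ u| ≤ C) :
    Integrable (fun u => φ u * w u) (volume.restrict (Icc a b)) :=
  hw.bdd_mul hφ.aestronglyMeasurable
    ((ae_restrict_mem measurableSet_Icc).mono fun u hu => by
      simpa [Real.norm_eq_abs] using hC u hu)

lemma poly_bound (a b : ℝ) (f : Polynomial ℝ) : ∃ C, ∀ u ∈ Icc a b, |f.eval u| ≤ C := by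
  simpa [Real.norm_eq_abs] using
    isCompact_Icc.exists_bound_of_continuousOn (f.continuous.continuousOn (s := Icc a b))

lemma int_poly_mul {a b : ℝ} {w : ℝ → ℝ} (hw : Integrable w (volume.restrict (Icc a b)))
    (f : Polynomial ℝ) : Integrable (fun u => f.eval u * w u) (volume.restrict (Icc a b)) := by
  obtain ⟨C, hC⟩ := poly_bound a b f
  exact int_mul hw (f.continuous.measurable) hC

lemma dd_s16 {a b : ℝ} {w : ℝ → ℝ} (hw : Integrable w (volume.restrict (Icc a b)))
    (f : Polynomial ℝ) (x : ℝ) :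
    ∫ u in Icc a b, (f.eval u - f.eval x) * w u / (u - x)
      = (ddPoly (fun i => ∫ u in Icc a b, u ^ i * w u) f).eval x := by
  have hne : ∀ᵐ u ∂(volume.restrict (Icc a b)), u ≠ x :=
    ae_restrict_of_ae (by
      rw [ae_iff]
      simp only [not_not, setOf_eq_eq_singleton]
      exact Real.volume_singleton)
  have key : (fun u => (f.eval u - f.eval x) * w u / (u - x))
      =ᵐ[volume.restrict (Icc a b)]
      (fun u => ∑ n ∈ Finset.range (f.natDegree + 1), ∑ i ∈ Finset.range n,
        (f.coeff n * x ^ (n - 1 - i)) * (u ^ i * w u)) := by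
    filter_upwards [hne] with u hu
    have hux : u - x ≠ 0 := sub_ne_zero.2 hu
    have hev : f.eval u - f.eval x
        = (∑ n ∈ Finset.range (f.natDegree + 1), f.coeff n *
            ∑ i ∈ Finset.range n, u ^ i * x ^ (n - 1 - i)) * (u - x) := by
      rw [Polynomial.eval_eq_sum_range (x := u), Polynomial.eval_eq_sum_range (x := x),
        Finset.sum_mul, ← Finset.sum_sub_distrib]
      refine Finset.sum_congr rfl fun n _ => ?_
      have h := geom_sum₂_mul u x n
      linear_combination (-(f.coeff n)) * h
    have h2 : (∑ n ∈ Finset.range (f.natDegree + 1), ∑ i ∈ Finset.range n,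
        (f.coeff n * x ^ (n - 1 - i)) * (u ^ i * w u))
        = (∑ n ∈ Finset.range (f.natDegree + 1), f.coeff n *
            ∑ i ∈ Finset.range n, u ^ i * x ^ (n - 1 - i)) * w u := by
      rw [Finset.sum_mul]
      refine Finset.sum_congr rfl fun n _ => ?_
      rw [Finset.mul_sum, Finset.sum_mul]
      exact Finset.sum_congr rfl fun i _ => by ring
    rw [hev, h2, div_eq_iff hux]
    ring
  rw [MeasureTheory.integral_congr_ae key]
  have hi : ∀ i : ℕ, Integrable (fun u => u ^ i * w u) (volume.restrict (Icc a b)) := by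
    intro i
    refine int_mul hw (measurable_id.pow_const i) (C := (max |a| |b|) ^ i) fun u hu => ?_
    rw [abs_pow]
    refine pow_le_pow_left₀ (abs_nonneg u) (abs_le.mpr ⟨?_, ?_⟩) i
    · have := neg_abs_le a
      have := le_max_left |a| |b|
      linarith [hu.1]
    · have := le_abs_self b
      have := le_max_right |a| |b|
      linarith [hu.2]
  rw [MeasureTheory.integral_finset_sum _ (fun n _ =>
    integrable_finset_sum _ (fun i _ => (hi i).const_mul _))]
  simp only [ddPoly, Polynomial.eval_finset_sum, Polynomial.eval_mul, Polynomial.eval_C,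
    Polynomial.eval_pow, Polynomial.eval_X]
  refine Finset.sum_congr rfl fun n _ => ?_
  rw [MeasureTheory.integral_finset_sum _ (fun i _ => (hi i).const_mul _), Finset.mul_sum]
  refine Finset.sum_congr rfl fun i _ => ?_
  rw [integral_const_mul]
  ring

lemma inv_bound {a b r u : ℝ} (hr : b < r) (hu : u ∈ Icc a b) :
    |(r - u)⁻¹| ≤ (r - b)⁻¹ := by
  have h1 : 0 < r - b := by linarith
  have h2 : r - b ≤ r - u := by linarith [hu.2]
  have h3 : 0 < r - u := lt_of_lt_of_le h1 h2
  rw [abs_of_pos (inv_pos.2 h3)]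
  exact inv_anti₀ h1 h2

lemma int_div_sub {a b : ℝ} {w : ℝ → ℝ} (hw : Integrable w (volume.restrict (Icc a b)))
    (f : Polynomial ℝ) {r : ℝ} (hr : b < r) :
    Integrable (fun u => f.eval u * w u / (r - u)) (volume.restrict (Icc a b)) := by
  obtain ⟨C, hC⟩ := poly_bound a b f
  have : (fun u => f.eval u * w u / (r - u)) = fun u => (f.eval u * (r - u)⁻¹) * w u := by
    funext u; ring
  rw [this]
  refine int_mul hw (f.continuous.measurable.mul ((measurable_const.sub measurable_id).inv))
    (C := C * (r - b)⁻¹) fun u hu => ?_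
  rw [abs_mul]
  exact mul_le_mul (hC u hu) (inv_bound hr hu) (abs_nonneg _)
    (le_trans (abs_nonneg _) (hC u hu))

lemma dd_outer {a b : ℝ} {w : ℝ → ℝ} (hw : Integrable w (volume.restrict (Icc a b)))
    (f : Polynomial ℝ) {r : ℝ} (hr : b < r) :
    (ddPoly (fun i => ∫ u in Icc a b, u ^ i * w u) f).eval r
      = f.eval r * (∫ u in Icc a b, w u / (r - u))
        - ∫ u in Icc a b, f.eval u * w u / (r - u) := by
  rw [← dd_s16 hw f r]
  have hpt : ∀ u, (f.eval u - f.eval r) * w u / (u - r)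
      = f.eval r * (w u / (r - u)) - f.eval u * w u / (r - u) := by
    intro u
    by_cases h : u = r
    · subst h; simp
    · have h1 : u - r ≠ 0 := sub_ne_zero.2 h
      have h2 : r - u ≠ 0 := fun hc => h1 (by linarith [sub_eq_zero.1 hc])
      field_simp
      ring
  simp only [hpt]
  have i1 : Integrable (fun u => f.eval r * (w u / (r - u))) (volume.restrict (Icc a b)) := by
    have := int_div_sub hw (1 : Polynomial ℝ) hr
    simp only [Polynomial.eval_one, one_mul] at this
    exact this.const_mul _
  have i2 := int_div_sub hw f hr
  rw [integral_sub i1 i2, integral_const_mul]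

lemma phi_tendsto {a b : ℝ} {w : ℝ → ℝ} (hw : Integrable w (volume.restrict (Icc a b)))
    (f : Polynomial ℝ) :
    Tendsto (fun r => ∫ u in Icc a b, f.eval u * w u / (r - u)) atTop (nhds 0) := by
  have hint : Integrable (fun u => |f.eval u * w u|) (volume.restrict (Icc a b)) :=
    (int_poly_mul hw f).abs
  set C : ℝ := ∫ u in Icc a b, |f.eval u * w u| with hc
  apply squeeze_zero_norm' (a := fun r => C * (r - b)⁻¹)
  · filter_upwards [eventually_gt_atTop b] with r hr
    calc ‖∫ u in Icc a b, f.eval u * w u / (r - u)‖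
        ≤ ∫ u in Icc a b, ‖f.eval u * w u / (r - u)‖ := norm_integral_le_integral_norm _
      _ ≤ ∫ u in Icc a b, |f.eval u * w u| * (r - b)⁻¹ := by
          refine integral_mono_ae ((int_div_sub hw f hr).norm) (hint.mul_const _) ?_
          filter_upwards [ae_restrict_mem measurableSet_Icc] with u hu
          rw [Real.norm_eq_abs, div_eq_mul_inv, abs_mul]
          exact mul_le_mul_of_nonneg_left (inv_bound hr hu) (abs_nonneg _)
      _ = C * (r - b)⁻¹ := by rw [integral_mul_const]
  · have h1 : Tendsto (fun r : ℝ => r - b) atTop atTop :=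
      tendsto_atTop_add_const_right atTop (-b) tendsto_id
    have := (h1.inv_tendsto_atTop).const_mul C
    simpa using this

lemma st_lim {a b c : ℝ} {w : ℝ → ℝ} (hw : Integrable w (volume.restrict (Icc a b)))
    (hw1 : ∫ u in Icc a b, w u = 1) :
    Tendsto (fun r => (r - c) * ∫ u in Icc a b, w u / (r - u)) atTop (nhds 1) := by
  have h1 := phi_tendsto hw (Polynomial.X - Polynomial.C c)
  simp only [Polynomial.eval_sub, Polynomial.eval_X, Polynomial.eval_C] at h1
  have h2 : Tendsto (fun r => 1 + ∫ u in Icc a b, (u - c) * w u / (r - u)) atTop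
      (nhds (1 + 0)) := tendsto_const_nhds.add h1
  rw [add_zero] at h2
  refine h2.congr' ?_
  filter_upwards [eventually_gt_atTop b] with r hr
  have i1 : Integrable (fun u => w u / (r - u)) (volume.restrict (Icc a b)) := by
    have := int_div_sub hw (1 : Polynomial ℝ) hr
    simpa using this
  have i2 := int_div_sub hw (Polynomial.X - Polynomial.C c) hr
  simp only [Polynomial.eval_sub, Polynomial.eval_X, Polynomial.eval_C] at i2
  have key : ∀ᵐ u ∂(volume.restrict (Icc a b)),
      w u + (u - c) * w u / (r - u) = (r - c) * (w u / (r - u)) := by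
    filter_upwards [ae_restrict_mem measurableSet_Icc] with u hu
    have h2 : r - u ≠ 0 := by
      have := hu.2; intro hc; have : r = u := by linarith [sub_eq_zero.1 hc]
      linarith [hu.2]
    field_simp
    ring
  calc 1 + ∫ u in Icc a b, (u - c) * w u / (r - u)
      = ∫ u in Icc a b, (w u + (u - c) * w u / (r - u)) := by
        rw [integral_add hw i2, hw1]
    _ = ∫ u in Icc a b, (r - c) * (w u / (r - u)) := integral_congr_ae key
    _ = (r - c) * ∫ u in Icc a b, w u / (r - u) := integral_const_mul _ _

lemma poly_eq_zero_of_tendsto {h : Polynomial ℝ}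
    (H : Tendsto (fun r => h.eval r) atTop (nhds 0)) : h = 0 := by
  by_cases hd : h.degree ≤ 0
  · have hC := Polynomial.eq_C_of_degree_le_zero hd
    rw [hC] at H
    simp only [Polynomial.eval_C] at H
    have : h.coeff 0 = 0 := tendsto_nhds_unique tendsto_const_nhds H
    rw [hC, this, map_zero]
  · exfalso
    have habs := Polynomial.abs_tendsto_atTop h (lt_of_not_ge hd)
    exact not_tendsto_atTop_of_tendsto_nhds (by simpa using H.abs) habs


/-- The composition formula `V_ρ^{t·s} = V_{ρ_t}^s ∘ V_ρ^t` holds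
on the hyperplane `H_ρ` (on the span of the orthonormal polynomials `P_n`,
`n ≥ 1`, i.e. on mean-zero polynomials). -/
theorem stmt_16 (a b : ℝ) (hab : a < b) (ρ ρt : ℝ → ℝ) (t s c₁ : ℝ)
    (ht : 0 < t) (hs : 0 < s)
    (hρ : ∀ x ∈ Icc a b, 0 ≤ ρ x) (hρ1 : ∫ x in Icc a b, ρ x = 1)
    (hρt : ∀ x ∈ Icc a b, 0 ≤ ρt x) (hρt1 : ∫ x in Icc a b, ρt x = 1)
    (hc₁ : c₁ = ∫ x in Icc a b, x * ρ x)
    (hc₁t : c₁ = ∫ x in Icc a b, x * ρt x)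
    -- ρ_t equi-normal with ρ, parameter t
    (hrel : ∀ z ∉ (fun x : ℝ => (x : ℂ)) '' Icc a b,
      (∫ u in Icc a b, (ρt u : ℂ) / (z - (u : ℂ))) *
          ((t : ℂ) + (1 - (t : ℂ)) * (z - (c₁ : ℂ)) *
            ∫ u in Icc a b, (ρ u : ℂ) / (z - (u : ℂ)))
        = ∫ u in Icc a b, (ρ u : ℂ) / (z - (u : ℂ)))
    (p : Polynomial ℝ)
    (hp0 : ∫ x in Icc a b, p.eval x * ρ x = 0)
    (g : ℝ → ℝ)
    -- g = V_ρ^t(p)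
    (hg : ∀ x, g x = t * p.eval x + (1 - t) * (x - c₁) *
      ∫ u in Icc a b, (p.eval u - p.eval x) * ρ u / (u - x)) :
    ∀ x ∈ Icc a b,
      t * s * p.eval x + (1 - t * s) * (x - c₁) *
          (∫ u in Icc a b, (p.eval u - p.eval x) * ρ u / (u - x))
        = s * g x + (1 - s) * (x - c₁) *
            ∫ u in Icc a b, (g u - g x) * ρt u / (u - x) := by
  intro x hx
  have hiρ : Integrable ρ (volume.restrict (Icc a b)) := by
    by_contra hcon
    rw [integral_undef hcon] at hρ1
    exact one_ne_zero hρ1.symm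
  have hiρt : Integrable ρt (volume.restrict (Icc a b)) := by
    by_contra hcon
    rw [integral_undef hcon] at hρt1
    exact one_ne_zero hρt1.symm
  -- real version of hrel
  have hrelR : ∀ r : ℝ, b < r →
      (∫ u in Icc a b, ρt u / (r - u)) *
        (t + (1 - t) * (r - c₁) * ∫ u in Icc a b, ρ u / (r - u))
      = ∫ u in Icc a b, ρ u / (r - u) := by
    intro r hr
    have hmem : (r : ℂ) ∉ (fun x : ℝ => (x : ℂ)) '' Icc a b := by
      rintro ⟨y, hy, hyr⟩
      have hyr' : y = r := by simpa using hyr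
      subst hyr'
      linarith [hy.2]
    have h := hrel _ hmem
    have e1 : (∫ u in Icc a b, (ρt u : ℂ) / ((r : ℂ) - (u : ℂ)))
        = ((∫ u in Icc a b, ρt u / (r - u) : ℝ) : ℂ) :=
      (integral_congr_ae (Filter.Eventually.of_forall fun u => by push_cast; rfl)).trans
        (integral_ofReal (f := fun u => ρt u / (r - u)))
    have e2 : (∫ u in Icc a b, (ρ u : ℂ) / ((r : ℂ) - (u : ℂ)))
        = ((∫ u in Icc a b, ρ u / (r - u) : ℝ) : ℂ) :=
      (integral_congr_ae (Filter.Eventually.of_forall fun u => by push_cast; rfl)).trans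
        (integral_ofReal (f := fun u => ρ u / (r - u)))
    rw [e1, e2] at h
    exact_mod_cast h
  have hT : ∀ y : ℝ, ∫ u in Icc a b, (p.eval u - p.eval y) * ρ u / (u - y)
      = (ddPoly (fun i => ∫ u in Icc a b, u ^ i * ρ u) p).eval y := fun y => dd_s16 hiρ p y
  set Q : Polynomial ℝ := ddPoly (fun i => ∫ u in Icc a b, u ^ i * ρ u) p with hQdef
  set G : Polynomial ℝ := Polynomial.C t * p +
    Polynomial.C (1 - t) * (Polynomial.X - Polynomial.C c₁) * Q with hGdef
  have hGeval : ∀ y : ℝ, G.eval y = t * p.eval y + (1 - t) * (y - c₁) * Q.eval y := by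
    intro y
    rw [hGdef]
    simp only [Polynomial.eval_add, Polynomial.eval_mul, Polynomial.eval_sub,
      Polynomial.eval_C, Polynomial.eval_X]
  have hgG : ∀ y : ℝ, g y = G.eval y := by
    intro y
    rw [hg y, hT y, hGeval y]
  -- the key polynomial identity
  have hQ2 : ddPoly (fun i => ∫ u in Icc a b, u ^ i * ρt u) G = Q := by
    have hΦp := phi_tendsto hiρ p
    have hΦG := phi_tendsto hiρt G
    have hSt := st_lim (c := c₁) hiρt hρt1
    have hcomb : Tendsto (fun r =>
        (∫ u in Icc a b, p.eval u * ρ u / (r - u)) *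
          (1 - (1 - t) * ((r - c₁) * ∫ u in Icc a b, ρt u / (r - u)))
        - ∫ u in Icc a b, G.eval u * ρt u / (r - u)) atTop
        (nhds (0 * (1 - (1 - t) * 1) - 0)) :=
      (hΦp.mul (tendsto_const_nhds.sub (tendsto_const_nhds.mul hSt))).sub hΦG
    rw [show (0 : ℝ) * (1 - (1 - t) * 1) - 0 = 0 by ring] at hcomb
    have hz : Tendsto (fun r =>
        (ddPoly (fun i => ∫ u in Icc a b, u ^ i * ρt u) G - Q).eval r) atTop (nhds 0) := by
      refine hcomb.congr' ?_
      filter_upwards [eventually_gt_atTop b] with r hr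
      have e1 := dd_outer hiρ p hr
      have e2 := dd_outer hiρt G hr
      have e3 := hGeval r
      have e4 := hrelR r hr
      rw [Polynomial.eval_sub]
      rw [← hQdef] at e1
      linear_combination (1 - (1 - t) * (r - c₁) * (∫ u in Icc a b, ρt u / (r - u))) * e1
        - e2 - (∫ u in Icc a b, ρt u / (r - u)) * e3 - (p.eval r) * e4
    have h0 := poly_eq_zero_of_tendsto hz
    exact sub_eq_zero.1 h0
  have hAx : ∫ u in Icc a b, (g u - g x) * ρt u / (u - x) = Q.eval x := by
    simp only [hgG]
    rw [dd_s16 hiρt G x, hQ2]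
  rw [hT x, hAx, hg x, hT x]
  ring
end

section
/- Let ρ be a continuous probability density on compact I with reducer φ and secondary measure density μ(x) = ρ(x)/(φ²(x)/4 + π²ρ²(x)). Suppose the boundary limits of S_ρ exist: lim_{ε→0⁺} S_ρ(x±iε) = φ(x)/2 ∓ iπρ(x). Then applying the Stieltjes–Perron inversion to H(z) = S_ρ(z)/(t + (1−t)(z−c₁)S_ρ(z)) yields ρ_t(x) = t·ρ(x) / ([(t−1)(x−c₁)φ(x)/2 − t]² + π²ρ²(x)(t−1)²(x−c₁)²). -/
open MeasureTheory Set Filter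

/-- Stieltjes–Perron inversion applied to
`H(z) = S_ρ(z)/(t + (1−t)(z−c₁)S_ρ(z))` yields
`ρ_t(x) = t·ρ(x)/([(t−1)(x−c₁)φ(x)/2 − t]² + π²ρ²(x)(t−1)²(x−c₁)²)`. -/
theorem stmt_19 (a b : ℝ) (hab : a < b) (ρ φ : ℝ → ℝ) (t c₁ : ℝ) (ht : 0 < t)
    (hρcont : ContinuousOn ρ (Icc a b))
    (hρ : ∀ x ∈ Icc a b, 0 ≤ ρ x) (hρ1 : ∫ x in Icc a b, ρ x = 1)
    (hc₁ : c₁ = ∫ x in Icc a b, x * ρ x)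
    (hφ : ∀ x ∈ Icc a b,
      Tendsto (fun ε : ℝ =>
          2 * ∫ u in Icc a b, (x - u) * ρ u / ((x - u) ^ 2 + ε ^ 2))
        (nhdsWithin 0 (Ioi 0)) (nhds (φ x)))
    (Sρ H : ℂ → ℂ)
    (hSρ : ∀ z : ℂ, z.im ≠ 0 →
      Sρ z = ∫ u in Icc a b, (ρ u : ℂ) / (z - (u : ℂ)))
    -- boundary values S_ρ(x ± i0) = φ(x)/2 ∓ iπρ(x)
    (hbp : ∀ x ∈ Icc a b,
      Tendsto (fun ε : ℝ => Sρ ((x : ℂ) + Complex.I * ε))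
        (nhdsWithin 0 (Ioi 0))
        (nhds ((φ x / 2 : ℝ) - Complex.I * (Real.pi * ρ x))))
    (hbm : ∀ x ∈ Icc a b,
      Tendsto (fun ε : ℝ => Sρ ((x : ℂ) - Complex.I * ε))
        (nhdsWithin 0 (Ioi 0))
        (nhds ((φ x / 2 : ℝ) + Complex.I * (Real.pi * ρ x))))
    -- the denominator of H does not vanish
    (hden : ∀ z : ℂ, z.im ≠ 0 →
      (t : ℂ) + (1 - (t : ℂ)) * (z - (c₁ : ℂ)) * Sρ z ≠ 0)
    (hdenb : ∀ x ∈ Icc a b,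
      ((t - 1) * (x - c₁) * φ x / 2 - t) ^ 2
        + Real.pi ^ 2 * ρ x ^ 2 * (t - 1) ^ 2 * (x - c₁) ^ 2 ≠ 0)
    (hH : ∀ z : ℂ, z.im ≠ 0 →
      H z = Sρ z / ((t : ℂ) + (1 - (t : ℂ)) * (z - (c₁ : ℂ)) * Sρ z)) :
    ∀ x ∈ Icc a b,
      Tendsto (fun ε : ℝ =>
          (H ((x : ℂ) - Complex.I * ε) - H ((x : ℂ) + Complex.I * ε)) /
            (2 * Complex.I * Real.pi))
        (nhdsWithin 0 (Ioi 0))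
        (nhds ((t * ρ x /
          (((t - 1) * (x - c₁) * φ x / 2 - t) ^ 2
            + Real.pi ^ 2 * ρ x ^ 2 * (t - 1) ^ 2 * (x - c₁) ^ 2) : ℝ))) := by
  intro x hx
  set Lp : ℂ := ((φ x / 2 : ℝ) : ℂ) - Complex.I * (Real.pi * ρ x) with hLp
  set Lm : ℂ := ((φ x / 2 : ℝ) : ℂ) + Complex.I * (Real.pi * ρ x) with hLm
  set Dp : ℂ := (t : ℂ) + (1 - (t : ℂ)) * ((x : ℂ) - (c₁ : ℂ)) * Lp with hDp
  set Dm : ℂ := (t : ℂ) + (1 - (t : ℂ)) * ((x : ℂ) - (c₁ : ℂ)) * Lm with hDm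
  set d : ℝ := ((t - 1) * (x - c₁) * φ x / 2 - t) ^ 2
      + Real.pi ^ 2 * ρ x ^ 2 * (t - 1) ^ 2 * (x - c₁) ^ 2 with hd
  have hprod : Dp * Dm = (d : ℂ) := by
    simp only [hDp, hDm, hLp, hLm, hd]
    push_cast
    ring_nf
    simp [Complex.I_sq]
    ring
  have hdC : (d : ℂ) ≠ 0 := by
    exact_mod_cast Complex.ofReal_ne_zero.mpr (hdenb x hx)
  have hDp0 : Dp ≠ 0 := fun h => hdC (by rw [← hprod, h, zero_mul])
  have hDm0 : Dm ≠ 0 := fun h => hdC (by rw [← hprod, h, mul_zero])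
  have hpi : (Real.pi : ℂ) ≠ 0 := by
    exact_mod_cast Complex.ofReal_ne_zero.mpr Real.pi_ne_zero
  have h2Iπ : (2 * Complex.I * (Real.pi : ℂ)) ≠ 0 := by
    simp [Complex.I_ne_zero, hpi]
  -- convergence of z ± iε to x
  have hzm : Tendsto (fun ε : ℝ => (x : ℂ) - Complex.I * ε)
      (nhdsWithin 0 (Ioi 0)) (nhds (x : ℂ)) := by
    have : Tendsto (fun ε : ℝ => (x : ℂ) - Complex.I * ε) (nhds 0) (nhds (x : ℂ)) := by
      have := (tendsto_const_nhds.sub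
        (tendsto_const_nhds.mul (Complex.continuous_ofReal.tendsto 0)) :
        Tendsto (fun ε : ℝ => (x : ℂ) - Complex.I * ε) (nhds 0) (nhds ((x:ℂ) - Complex.I * ((0:ℝ):ℂ))))
      simpa using this
    exact this.mono_left nhdsWithin_le_nhds
  have hzp : Tendsto (fun ε : ℝ => (x : ℂ) + Complex.I * ε)
      (nhdsWithin 0 (Ioi 0)) (nhds (x : ℂ)) := by
    have : Tendsto (fun ε : ℝ => (x : ℂ) + Complex.I * ε) (nhds 0) (nhds (x : ℂ)) := by
      have := (tendsto_const_nhds.add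
        (tendsto_const_nhds.mul (Complex.continuous_ofReal.tendsto 0)) :
        Tendsto (fun ε : ℝ => (x : ℂ) + Complex.I * ε) (nhds 0) (nhds ((x:ℂ) + Complex.I * ((0:ℝ):ℂ))))
      simpa using this
    exact this.mono_left nhdsWithin_le_nhds
  have hSm := hbm x hx
  have hSp := hbp x hx
  have hHm : Tendsto (fun ε : ℝ => Sρ ((x : ℂ) - Complex.I * ε) /
      ((t : ℂ) + (1 - (t : ℂ)) * (((x : ℂ) - Complex.I * ε) - (c₁ : ℂ)) * Sρ ((x : ℂ) - Complex.I * ε)))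
      (nhdsWithin 0 (Ioi 0)) (nhds (Lm / Dm)) :=
    hSm.div (tendsto_const_nhds.add
      ((tendsto_const_nhds.mul (hzm.sub tendsto_const_nhds)).mul hSm)) hDm0
  have hHp : Tendsto (fun ε : ℝ => Sρ ((x : ℂ) + Complex.I * ε) /
      ((t : ℂ) + (1 - (t : ℂ)) * (((x : ℂ) + Complex.I * ε) - (c₁ : ℂ)) * Sρ ((x : ℂ) + Complex.I * ε)))
      (nhdsWithin 0 (Ioi 0)) (nhds (Lp / Dp)) :=
    hSp.div (tendsto_const_nhds.add
      ((tendsto_const_nhds.mul (hzp.sub tendsto_const_nhds)).mul hSp)) hDp0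
  have hlim : Tendsto (fun ε : ℝ =>
      (H ((x : ℂ) - Complex.I * ε) - H ((x : ℂ) + Complex.I * ε)) /
        (2 * Complex.I * Real.pi))
      (nhdsWithin 0 (Ioi 0)) (nhds ((Lm / Dm - Lp / Dp) / (2 * Complex.I * Real.pi))) := by
    apply Tendsto.congr' _ (((hHm.sub hHp).div tendsto_const_nhds h2Iπ))
    filter_upwards [self_mem_nhdsWithin] with ε (hε : 0 < ε)
    have him : ((x : ℂ) + Complex.I * ε).im = ε := by simp
    have him' : ((x : ℂ) - Complex.I * ε).im = -ε := by simp
    rw [hH _ (by rw [him']; exact neg_ne_zero.mpr hε.ne'),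
        hH _ (by rw [him]; exact hε.ne')]
    rfl
  have hval : (Lm / Dm - Lp / Dp) / (2 * Complex.I * Real.pi) = ((t * ρ x / d : ℝ) : ℂ) := by
    have : Lm * Dp - Dm * Lp = (t : ℂ) * (ρ x) * (2 * Complex.I * Real.pi) := by
      simp only [hDp, hDm, hLp, hLm]
      ring
    rw [div_sub_div _ _ hDm0 hDp0, div_div, this, mul_comm Dm Dp, hprod]
    push_cast
    rw [mul_comm ((d:ℂ)) _, mul_div_assoc, div_mul_eq_div_div_swap,
      div_right_comm, div_self h2Iπ]
    ring
  rw [← hval] at *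
  exact hlim
end
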